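/- arXiv:2107.08071 — 4 statements merged into one kernel-verified Lean document; each statement's English description precedes it below -/
import Mathlib

section
/- For intertwined perfect matchings Γ on {1,…,2n} and Γ' on {1,…,2m}, one has Γ ⊑ Γ' if and only if p_Γ ≤_i p_{Γ'}, where p_Γ and p_{Γ'} are the permutations associated to Γ and Γ'. -/
/-- A vertex `v` is *in* the matching `Γ` if it is an endpoint of some edge of `Γ`. -/
def InMatch (Γ : Finset (Sym2 ℕ)) (v : ℕ) : Prop := ∃ e ∈ Γ, v ∈ e

/-- A matching on ℕ: a finite set of edges (unordered pairs of distinct naturals)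
that are pairwise vertex-disjoint. -/
def IsMatching (Γ : Finset (Sym2 ℕ)) : Prop :=
  (∀ e ∈ Γ, ¬ e.IsDiag) ∧
    ∀ e ∈ Γ, ∀ f ∈ Γ, e ≠ f → ∀ v : ℕ, v ∈ e → v ∉ f

/-- Type I(a) move: add a single new edge whose endpoints are not in `Γ`. -/
def TypeIa (Γ Γ' : Finset (Sym2 ℕ)) : Prop :=
  ∃ i j : ℕ, i ≠ j ∧ ¬ InMatch Γ i ∧ ¬ InMatch Γ j ∧ Γ' = insert s(i, j) Γ

/-- Type I(b) move: replace an edge `{i,j}` by `{i,j+1}` when `j+1` is not in `Γ`. -/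
def TypeIb (Γ Γ' : Finset (Sym2 ℕ)) : Prop :=
  ∃ i j : ℕ, s(i, j) ∈ Γ ∧ ¬ InMatch Γ (j + 1) ∧
    Γ' = insert s(i, j + 1) (Γ.erase s(i, j))

/-- Type II(a) move. -/
def TypeIIa (Γ Γ' : Finset (Sym2 ℕ)) : Prop :=
  ∃ a b c d : ℕ, a < b ∧ b < c ∧ c < d ∧ s(a, d) ∈ Γ ∧ s(b, c) ∈ Γ ∧
    (∀ v w : ℕ, a < v → v < b → s(v, w) ∈ Γ → c < w) ∧
    Γ' = insert s(a, c) (insert s(b, d) ((Γ.erase s(a, d)).erase s(b, c)))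

/-- Type II(b) move. -/
def TypeIIb (Γ Γ' : Finset (Sym2 ℕ)) : Prop :=
  ∃ a b c d : ℕ, a < b ∧ b < c ∧ c < d ∧ s(a, c) ∈ Γ ∧ s(b, d) ∈ Γ ∧
    (∀ v w : ℕ, b < v → v < c → s(v, w) ∈ Γ → c < w) ∧
    Γ' = insert s(a, b) (insert s(c, d) ((Γ.erase s(a, c)).erase s(b, d)))

/-- A single move of any type. -/
def MatchStep (Γ Γ' : Finset (Sym2 ℕ)) : Prop :=
  TypeIa Γ Γ' ∨ TypeIb Γ Γ' ∨ TypeIIa Γ Γ' ∨ TypeIIb Γ Γ'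

/-- The partial order `⊑`: `Γ ⊑ Γ'` if `Γ'` is obtained from `Γ` by a finite
sequence of Type I and Type II moves. -/
def MatchLe : Finset (Sym2 ℕ) → Finset (Sym2 ℕ) → Prop :=
  Relation.ReflTransGen MatchStep

/-- The permutation graph of `σ`: vertices `i < j` are adjacent iff `σ i > σ j`. -/
def permGraph {n : ℕ} (σ : Equiv.Perm (Fin n)) : SimpleGraph (Fin n) :=
  SimpleGraph.fromRel (fun i j => i < j ∧ σ j < σ i)

/-- `τ` is obtained from `σ` by a Type II move at positions `p < q`:
`σ p < σ q`, every value strictly between `σ p` and `σ q` occurs at a position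
smaller than `q`, and `τ` is `σ` with the values at positions `p` and `q` swapped. -/
def PermTypeIIAt {n : ℕ} (σ τ : Equiv.Perm (Fin n)) (p q : Fin n) : Prop :=
  p < q ∧ σ p < σ q ∧ (∀ v : Fin n, σ p < v → v < σ q → σ.symm v < q) ∧
    τ = σ * Equiv.swap p q

/-- `τ` is obtained from `σ` by a Type II move. -/
def PermTypeII {n : ℕ} (σ τ : Equiv.Perm (Fin n)) : Prop :=
  ∃ p q : Fin n, PermTypeIIAt σ τ p q

/-- `σ` is Type-I-below `τ`: there is a strictly increasing choice of positions
`f` with `τ (f j) ≥ σ j` for all `j`, and `σ` order isomorphic to the subword of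
`τ` on those positions. -/
def TypeIBelow {n m : ℕ} (σ : Equiv.Perm (Fin n)) (τ : Equiv.Perm (Fin m)) : Prop :=
  ∃ f : Fin n → Fin m, StrictMono f ∧ (∀ j, (σ j : ℕ) ≤ (τ (f j) : ℕ)) ∧
    ∀ j k, σ j < σ k ↔ τ (f j) < τ (f k)

/-- One step of the order `≤ᵢ` on permutations of arbitrary sizes: either a
Type-I-below relation or (for equal sizes) a Type II move. -/
def PermStep : (Σ n : ℕ, Equiv.Perm (Fin n)) → (Σ n : ℕ, Equiv.Perm (Fin n)) → Prop :=
  fun x y => TypeIBelow x.2 y.2 ∨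
    ∃ h : x.1 = y.1, PermTypeII (Equiv.permCongr (finCongr h) x.2) y.2

/-- The order `≤ᵢ` on permutations of arbitrary sizes: the reflexive–transitive
closure of the union of the Type-I-below relation and the Type II move relation. -/
def PermLeI : (Σ n : ℕ, Equiv.Perm (Fin n)) → (Σ n : ℕ, Equiv.Perm (Fin n)) → Prop :=
  Relation.ReflTransGen PermStep

/-- `Γ` is an intertwined perfect matching on `{1,…,2n}` with matching data `e`:
`Γ` is a matching whose set of matched vertices is exactly `{1,…,2n}`, and for
each `1 ≤ i ≤ n` the vertex `n+i` is matched to `e i ∈ {1,…,n}`. -/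
def IsIntertwined (n : ℕ) (Γ : Finset (Sym2 ℕ)) (e : ℕ → ℕ) : Prop :=
  IsMatching Γ ∧
  (∀ v : ℕ, InMatch Γ v ↔ 1 ≤ v ∧ v ≤ 2 * n) ∧
  (∀ i : ℕ, 1 ≤ i → i ≤ n → 1 ≤ e i ∧ e i ≤ n ∧ s(e i, n + i) ∈ Γ)

/-- The word `w_Γ` of an intertwined perfect matching with matching data `e`:
the `j`-th letter (0-based) is `e (n − j)`, i.e. `w_Γ = e_n e_{n−1} ⋯ e_1`. -/
def wd (n : ℕ) (e : ℕ → ℕ) : Fin n → ℕ := fun j => e (n - (j : ℕ))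

open Finset

theorem inf_eq_min {α : Type*} [LinearOrder α] (a b : α) : a ⊓ b = min a b := rfl
theorem sup_eq_max {α : Type*} [LinearOrder α] (a b : α) : a ⊔ b = max a b := rfl

namespace MAux

lemma sym2_eq (e : Sym2 ℕ) : s(e.inf, e.sup) = e := by
  induction e using Sym2.ind with
  | _ a b =>
    rcases le_total a b with h | h <;>
      simp [Sym2.mk_eq_mk_iff, inf_eq_min, sup_eq_max, min_eq_left, max_eq_right,
        min_eq_right, max_eq_left, h]

lemma mem_iff' {e : Sym2 ℕ} {v : ℕ} : v ∈ e ↔ v = e.inf ∨ v = e.sup := by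
  induction e using Sym2.ind with
  | _ a b =>
    simp only [Sym2.mem_iff, Sym2.inf_mk, Sym2.sup_mk, inf_eq_min, sup_eq_max]
    omega

lemma inf_mem (e : Sym2 ℕ) : e.inf ∈ e := mem_iff'.mpr (Or.inl rfl)
lemma sup_mem (e : Sym2 ℕ) : e.sup ∈ e := mem_iff'.mpr (Or.inr rfl)

lemma inf_lt_sup {e : Sym2 ℕ} (h : ¬ e.IsDiag) : e.inf < e.sup := by
  induction e using Sym2.ind with
  | _ a b =>
    simp only [Sym2.mk_isDiag_iff] at h
    simp only [Sym2.inf_mk, Sym2.sup_mk, inf_eq_min, sup_eq_max]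
    omega

variable {Δ : Finset (Sym2 ℕ)}

lemma edge_unique (h : IsMatching Δ) {e f : Sym2 ℕ} (he : e ∈ Δ) (hf : f ∈ Δ)
    {v : ℕ} (hv : v ∈ e) (hv' : v ∈ f) : e = f := by
  by_contra hne
  exact h.2 e he f hf hne v hv hv'

lemma edge_inf_lt_sup (h : IsMatching Δ) {e : Sym2 ℕ} (he : e ∈ Δ) : e.inf < e.sup :=
  inf_lt_sup (h.1 e he)

/-- left endpoints -/
def lefts (Δ : Finset (Sym2 ℕ)) : Finset ℕ := Δ.image Sym2.inf
/-- right endpoints -/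
def rights (Δ : Finset (Sym2 ℕ)) : Finset ℕ := Δ.image Sym2.sup

lemma inf_injOn (h : IsMatching Δ) : Set.InjOn Sym2.inf (Δ : Set (Sym2 ℕ)) := fun e he f hf hef =>
  edge_unique h he hf (inf_mem e) (hef ▸ inf_mem f : Sym2.inf e ∈ f)

lemma sup_injOn (h : IsMatching Δ) : Set.InjOn Sym2.sup (Δ : Set (Sym2 ℕ)) := fun e he f hf hef =>
  edge_unique h he hf (sup_mem e) (hef ▸ sup_mem f : Sym2.sup e ∈ f)

lemma card_lefts (h : IsMatching Δ) : (lefts Δ).card = Δ.card :=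
  card_image_of_injOn (inf_injOn h)

lemma card_rights (h : IsMatching Δ) : (rights Δ).card = Δ.card :=
  card_image_of_injOn (sup_injOn h)

/-- partner of a right endpoint -/
def ptn (Δ : Finset (Sym2 ℕ)) (r : ℕ) : ℕ := Δ.sup (fun e => if e.sup = r then e.inf else 0)

lemma ptn_eq (h : IsMatching Δ) {e : Sym2 ℕ} (he : e ∈ Δ) : ptn Δ e.sup = e.inf := by
  apply le_antisymm
  · apply Finset.sup_le
    intro f hf
    by_cases hfe : f.sup = e.sup
    · have : f = e := edge_unique h hf he (hfe ▸ sup_mem f : Sym2.sup e ∈ f) (sup_mem e)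
      simp [this]
    · simp [hfe]
  · have := Finset.le_sup (f := fun f => if f.sup = e.sup then f.inf else 0) he
    simpa [ptn] using this

lemma mem_rights_iff : ∀ {r : ℕ}, r ∈ rights Δ ↔ ∃ e ∈ Δ, e.sup = r := by
  simp [rights, eq_comm]

lemma mem_lefts_iff : ∀ {l : ℕ}, l ∈ lefts Δ ↔ ∃ e ∈ Δ, e.inf = l := by
  simp [lefts, eq_comm]

lemma ptn_edge (h : IsMatching Δ) {r : ℕ} (hr : r ∈ rights Δ) : s(ptn Δ r, r) ∈ Δ := by
  obtain ⟨e, he, rfl⟩ := mem_rights_iff.mp hr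
  rw [ptn_eq h he, sym2_eq]
  exact he

lemma ptn_mem_lefts (h : IsMatching Δ) {r : ℕ} (hr : r ∈ rights Δ) : ptn Δ r ∈ lefts Δ := by
  obtain ⟨e, he, rfl⟩ := mem_rights_iff.mp hr
  rw [ptn_eq h he]
  exact mem_image_of_mem _ he

lemma ptn_lt (h : IsMatching Δ) {r : ℕ} (hr : r ∈ rights Δ) : ptn Δ r < r := by
  obtain ⟨e, he, rfl⟩ := mem_rights_iff.mp hr
  rw [ptn_eq h he]
  exact edge_inf_lt_sup h he

lemma ptn_injOn (h : IsMatching Δ) {r r' : ℕ} (hr : r ∈ rights Δ) (hr' : r' ∈ rights Δ)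
    (hp : ptn Δ r = ptn Δ r') : r = r' := by
  obtain ⟨e, he, rfl⟩ := mem_rights_iff.mp hr
  obtain ⟨f, hf, rfl⟩ := mem_rights_iff.mp hr'
  rw [ptn_eq h he, ptn_eq h hf] at hp
  exact congrArg Sym2.sup (inf_injOn h he hf hp)

/-- if an edge has a left in `lefts` and the other end in `rights`, ends are ordered -/
lemma lt_of_mem_lr (h : IsMatching Δ) {x y : ℕ} (hxy : s(x,y) ∈ Δ)
    (hx : x ∈ lefts Δ) (hy : y ∈ rights Δ) : x < y := by
  rcases lt_trichotomy x y with hlt | rfl | hgt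
  · exact hlt
  · exact absurd rfl (Sym2.mk_isDiag_iff.not.mp (h.1 _ hxy))
  · -- then y is inf of the edge s(x,y); but y ∈ rights means y is sup of some edge
    exfalso
    obtain ⟨e, he, hes⟩ := mem_rights_iff.mp hy
    have hee : e = s(x,y) := edge_unique h he hxy (hes ▸ sup_mem e) (by simp)
    have : e.sup = max x y := by rw [hee]; rfl
    omega

lemma ptn_spec (h : IsMatching Δ) {x y : ℕ} (hxy : s(x,y) ∈ Δ) (hlt : x < y) :
    y ∈ rights Δ ∧ x ∈ lefts Δ ∧ ptn Δ y = x := by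
  have h1 : (s(x,y)).sup = y := by simp [Nat.max_eq_right hlt.le]
  have h2 : (s(x,y)).inf = x := by simp [Nat.min_eq_left hlt.le]
  refine ⟨mem_rights_iff.mpr ⟨_, hxy, h1⟩, mem_lefts_iff.mpr ⟨_, hxy, h2⟩, ?_⟩
  rw [← h1, ptn_eq h hxy, h2]

/-- enumeration of left endpoints in increasing order -/
def Lemb (h : IsMatching Δ) : Fin Δ.card ↪o ℕ := (lefts Δ).orderEmbOfFin (card_lefts h)
/-- enumeration of right endpoints in increasing order -/
def Remb (h : IsMatching Δ) : Fin Δ.card ↪o ℕ := (rights Δ).orderEmbOfFin (card_rights h)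

lemma Lemb_mem (h : IsMatching Δ) (j : Fin Δ.card) : Lemb h j ∈ lefts Δ :=
  orderEmbOfFin_mem _ _ _

lemma Remb_mem (h : IsMatching Δ) (j : Fin Δ.card) : Remb h j ∈ rights Δ :=
  orderEmbOfFin_mem _ _ _

lemma Lemb_surj (h : IsMatching Δ) {x : ℕ} (hx : x ∈ lefts Δ) : ∃ j, Lemb h j = x := by
  have : x ∈ Set.range (Lemb h) := by
    rw [Lemb, range_orderEmbOfFin]; exact hx
  exact this

lemma Remb_surj (h : IsMatching Δ) {x : ℕ} (hx : x ∈ rights Δ) : ∃ j, Remb h j = x := by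
  have : x ∈ Set.range (Remb h) := by
    rw [Remb, range_orderEmbOfFin]; exact hx
  exact this

noncomputable def phiFun (h : IsMatching Δ) : Fin Δ.card → Fin Δ.card := fun j =>
  ((lefts Δ).orderIsoOfFin (card_lefts h)).symm
    ⟨ptn Δ (Remb h j.rev), ptn_mem_lefts h (Remb_mem h j.rev)⟩

lemma Lemb_phiFun (h : IsMatching Δ) (j : Fin Δ.card) :
    Lemb h (phiFun h j) = ptn Δ (Remb h j.rev) := by
  have := ((lefts Δ).orderIsoOfFin (card_lefts h)).apply_symm_apply
    ⟨ptn Δ (Remb h j.rev), ptn_mem_lefts h (Remb_mem h j.rev)⟩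
  exact congrArg Subtype.val this

lemma phiFun_inj (h : IsMatching Δ) : Function.Injective (phiFun h) := by
  intro j j' hjj
  have := congrArg (Lemb h) hjj
  rw [Lemb_phiFun, Lemb_phiFun] at this
  have := ptn_injOn h (Remb_mem h j.rev) (Remb_mem h j'.rev) this
  have := (Remb h).injective this
  simpa [Fin.rev_inj] using this

/-- the permutation associated to a matching -/
noncomputable def phi (h : IsMatching Δ) : Equiv.Perm (Fin Δ.card) :=
  Equiv.ofBijective (phiFun h) (Finite.injective_iff_bijective.mp (phiFun_inj h))

lemma Lemb_phi (h : IsMatching Δ) (j : Fin Δ.card) :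
    Lemb h (phi h j) = ptn Δ (Remb h j.rev) := Lemb_phiFun h j

lemma phi_edge (h : IsMatching Δ) (j : Fin Δ.card) :
    s(Lemb h (phi h j), Remb h j.rev) ∈ Δ := by
  rw [Lemb_phi]
  exact ptn_edge h (Remb_mem h j.rev)

lemma phi_eq_of_edge (h : IsMatching Δ) {x y : ℕ} (hxy : s(x,y) ∈ Δ) (hlt : x < y)
    {i j : Fin Δ.card} (hx : Lemb h i = x) (hy : Remb h j.rev = y) : phi h j = i := by
  obtain ⟨-, -, hp⟩ := ptn_spec h hxy hlt
  apply (Lemb h).injective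
  rw [Lemb_phi, hy, hp, hx]

/-- the permutation of a matching, as a point of the sigma type -/
noncomputable def phiS (Δ : Finset (Sym2 ℕ)) (h : IsMatching Δ) : Σ n, Equiv.Perm (Fin n) :=
  ⟨Δ.card, phi h⟩

lemma injOn_of_monoOn {s : Finset ℕ} {u : ℕ → ℕ}
    (hm : ∀ x ∈ s, ∀ y ∈ s, x < y → u x < u y) : Set.InjOn u (s : Set ℕ) := by
  intro x hx y hy hxy
  rcases lt_trichotomy x y with hc | hc | hc
  · exact absurd hxy (hm x hx y hy hc).ne
  · exact hc
  · exact absurd hxy.symm (hm y hy x hx hc).ne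

lemma rev_cast {k k' : ℕ} (hk : k = k') (j : Fin k) :
    (Fin.cast hk j).rev = Fin.cast hk j.rev := by
  subst hk; rfl

lemma sigma_perm_ext {k k' : ℕ} (σ : Equiv.Perm (Fin k)) (σ' : Equiv.Perm (Fin k'))
    (hk : k = k') (hval : ∀ j : Fin k, (σ j : ℕ) = (σ' (Fin.cast hk j) : ℕ)) :
    (⟨k, σ⟩ : Σ n, Equiv.Perm (Fin n)) = ⟨k', σ'⟩ := by
  subst hk
  simp only [Fin.cast_refl, id] at hval
  congr 1
  ext j
  exact hval j

lemma phiS_congr (h : IsMatching Δ) {Δ' : Finset (Sym2 ℕ)} (h' : IsMatching Δ')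
    (uL uR : ℕ → ℕ)
    (hLim : lefts Δ' = (lefts Δ).image uL)
    (hRim : rights Δ' = (rights Δ).image uR)
    (hLmono : ∀ x ∈ lefts Δ, ∀ y ∈ lefts Δ, x < y → uL x < uL y)
    (hRmono : ∀ x ∈ rights Δ, ∀ y ∈ rights Δ, x < y → uR x < uR y)
    (hcomm : ∀ r ∈ rights Δ, ptn Δ' (uR r) = uL (ptn Δ r)) :
    phiS Δ h = phiS Δ' h' := by
  have hcard : Δ.card = Δ'.card := by
    rw [← card_lefts h, ← card_lefts h', hLim,
      Finset.card_image_of_injOn (injOn_of_monoOn hLmono)]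
  have hL : ∀ i : Fin Δ.card, Lemb h' (Fin.cast hcard i) = uL (Lemb h i) := by
    have key : (fun t : Fin Δ'.card => uL (Lemb h (Fin.cast hcard.symm t)))
        = ⇑((lefts Δ').orderEmbOfFin (card_lefts h')) := by
      apply orderEmbOfFin_unique
      · intro t
        rw [hLim]
        exact mem_image_of_mem _ (Lemb_mem h _)
      · intro t t' htt
        exact hLmono _ (Lemb_mem h _) _ (Lemb_mem h _)
          ((Lemb h).strictMono htt)
    intro i
    exact (congrFun key (Fin.cast hcard i)).symm
  have hR : ∀ i : Fin Δ.card, Remb h' (Fin.cast hcard i) = uR (Remb h i) := by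
    have key : (fun t : Fin Δ'.card => uR (Remb h (Fin.cast hcard.symm t)))
        = ⇑((rights Δ').orderEmbOfFin (card_rights h')) := by
      apply orderEmbOfFin_unique
      · intro t
        rw [hRim]
        exact mem_image_of_mem _ (Remb_mem h _)
      · intro t t' htt
        exact hRmono _ (Remb_mem h _) _ (Remb_mem h _)
          ((Remb h).strictMono htt)
    intro i
    exact (congrFun key (Fin.cast hcard i)).symm
  apply sigma_perm_ext _ _ hcard
  intro j
  have e1 : Lemb h' (phi h' (Fin.cast hcard j)) = ptn Δ' (Remb h' (Fin.cast hcard j).rev) :=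
    Lemb_phi h' _
  rw [rev_cast, hR j.rev, hcomm _ (Remb_mem h _), ← Lemb_phi h j, ← hL (phi h j)] at e1
  have := (Lemb h').injective e1
  rw [this]
  rfl

/-- the canonical intertwined matching of a permutation -/
def Mof (k : ℕ) (σ : Equiv.Perm (Fin k)) : Finset (Sym2 ℕ) :=
  (univ : Finset (Fin k)).image (fun j => s((σ j : ℕ) + 1, 2*k - (j : ℕ)))

lemma mem_Mof {k : ℕ} {σ : Equiv.Perm (Fin k)} {e : Sym2 ℕ} :
    e ∈ Mof k σ ↔ ∃ j : Fin k, s((σ j : ℕ) + 1, 2*k - (j : ℕ)) = e := by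
  simp [Mof]

lemma Mof_lt {k : ℕ} (σ : Equiv.Perm (Fin k)) (j : Fin k) :
    (σ j : ℕ) + 1 < 2*k - (j : ℕ) ∧ (σ j : ℕ) + 1 ≤ k ∧ k + 1 ≤ 2*k - (j : ℕ) := by
  have h1 := (σ j).isLt
  have h2 := j.isLt
  omega

lemma Mof_inf {k : ℕ} (σ : Equiv.Perm (Fin k)) (j : Fin k) :
    (s((σ j : ℕ) + 1, 2*k - (j : ℕ))).inf = (σ j : ℕ) + 1 := by
  have := (Mof_lt σ j).1
  simp [this.le]

lemma Mof_sup {k : ℕ} (σ : Equiv.Perm (Fin k)) (j : Fin k) :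
    (s((σ j : ℕ) + 1, 2*k - (j : ℕ))).sup = 2*k - (j : ℕ) := by
  have := (Mof_lt σ j).1
  simp [this.le]

lemma Mof_matching (k : ℕ) (σ : Equiv.Perm (Fin k)) : IsMatching (Mof k σ) := by
  constructor
  · intro e he
    obtain ⟨j, rfl⟩ := mem_Mof.mp he
    have := (Mof_lt σ j).1
    simp only [Sym2.mk_isDiag_iff]
    omega
  · intro e he f hf hef v hv hv'
    obtain ⟨j, rfl⟩ := mem_Mof.mp he
    obtain ⟨j', rfl⟩ := mem_Mof.mp hf
    have h1 := Mof_lt σ j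
    have h2 := Mof_lt σ j'
    simp only [Sym2.mem_iff] at hv hv'
    have hjj : j ≠ j' := fun hc => hef (by rw [hc])
    have hs : (σ j : ℕ) ≠ (σ j' : ℕ) := by
      intro hc
      exact hjj (σ.injective (Fin.ext hc))
    have hj : (j : ℕ) ≠ (j' : ℕ) := fun hc => hjj (Fin.ext hc)
    have k1 := j.isLt; have k2 := j'.isLt
    omega

lemma InMatch_Mof {k : ℕ} (σ : Equiv.Perm (Fin k)) (v : ℕ) :
    InMatch (Mof k σ) v ↔ 1 ≤ v ∧ v ≤ 2*k := by
  constructor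
  · rintro ⟨e, he, hv⟩
    obtain ⟨j, rfl⟩ := mem_Mof.mp he
    have := Mof_lt σ j
    simp only [Sym2.mem_iff] at hv
    rcases hv with rfl | rfl <;> omega
  · rintro ⟨h1, h2⟩
    by_cases hv : v ≤ k
    · refine ⟨_, mem_Mof.mpr ⟨σ.symm ⟨v-1, by omega⟩, rfl⟩, ?_⟩
      simp only [Sym2.mem_iff, Equiv.apply_symm_apply]
      left; omega
    · refine ⟨_, mem_Mof.mpr ⟨⟨2*k - v, by omega⟩, rfl⟩, ?_⟩
      simp only [Sym2.mem_iff]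
      right; omega

lemma lefts_Mof (k : ℕ) (σ : Equiv.Perm (Fin k)) : lefts (Mof k σ) = Finset.Icc 1 k := by
  ext v
  simp only [lefts, Finset.mem_image, Finset.mem_Icc]
  constructor
  · rintro ⟨e, he, rfl⟩
    obtain ⟨j, rfl⟩ := mem_Mof.mp he
    rw [Mof_inf]
    have := Mof_lt σ j
    omega
  · rintro ⟨h1, h2⟩
    exact ⟨_, mem_Mof.mpr ⟨σ.symm ⟨v-1, by omega⟩, rfl⟩, by
      rw [Mof_inf]; simp only [Equiv.apply_symm_apply]; omega⟩

lemma rights_Mof (k : ℕ) (σ : Equiv.Perm (Fin k)) : rights (Mof k σ) = Finset.Icc (k+1) (2*k) := by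
  ext v
  simp only [rights, Finset.mem_image, Finset.mem_Icc]
  constructor
  · rintro ⟨e, he, rfl⟩
    obtain ⟨j, rfl⟩ := mem_Mof.mp he
    rw [Mof_sup]
    have := Mof_lt σ j
    omega
  · rintro ⟨h1, h2⟩
    exact ⟨_, mem_Mof.mpr ⟨⟨2*k - v, by omega⟩, rfl⟩, by
      rw [Mof_sup]; show 2*k - (2*k - v) = v; omega⟩

lemma card_Mof (k : ℕ) (σ : Equiv.Perm (Fin k)) : (Mof k σ).card = k := by
  rw [← card_rights (Mof_matching k σ), rights_Mof, Nat.card_Icc]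
  omega

lemma ptn_Mof {k : ℕ} (σ : Equiv.Perm (Fin k)) (j : Fin k) :
    ptn (Mof k σ) (2*k - (j : ℕ)) = (σ j : ℕ) + 1 := by
  have he : s((σ j : ℕ) + 1, 2*k - (j : ℕ)) ∈ Mof k σ := mem_Mof.mpr ⟨j, rfl⟩
  have := ptn_eq (Mof_matching k σ) he
  rwa [Mof_sup, Mof_inf] at this

lemma phiS_Mof (k : ℕ) (σ : Equiv.Perm (Fin k)) :
    phiS (Mof k σ) (Mof_matching k σ) = ⟨k, σ⟩ := by
  set hM := Mof_matching k σ
  have hcard := card_Mof k σ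
  have hLe : ∀ t : Fin (Mof k σ).card, Lemb hM t = (t : ℕ) + 1 := by
    have key : (fun t : Fin (Mof k σ).card => (t : ℕ) + 1)
        = ⇑((lefts (Mof k σ)).orderEmbOfFin (card_lefts hM)) := by
      apply orderEmbOfFin_unique
      · intro t
        rw [lefts_Mof]
        have := t.isLt
        simp only [Finset.mem_Icc]
        omega
      · intro t t' htt
        simpa using htt
    intro t
    exact (congrFun key t).symm
  have hRe : ∀ t : Fin (Mof k σ).card, Remb hM t = k + 1 + (t : ℕ) := by
    have key : (fun t : Fin (Mof k σ).card => k + 1 + (t : ℕ))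
        = ⇑((rights (Mof k σ)).orderEmbOfFin (card_rights hM)) := by
      apply orderEmbOfFin_unique
      · intro t
        rw [rights_Mof]
        have := t.isLt
        simp only [Finset.mem_Icc]
        omega
      · intro t t' htt
        simpa using htt
    intro t
    exact (congrFun key t).symm
  apply sigma_perm_ext _ _ hcard
  intro j
  have e1 := Lemb_phi hM j
  rw [hLe, hRe] at e1
  have hrev : (j.rev : ℕ) = k - 1 - (j : ℕ) := by
    rw [Fin.val_rev]; omega
  have hj := j.isLt
  rw [hrev] at e1
  have e2 : k + 1 + (k - 1 - (j : ℕ)) = 2*k - ((Fin.cast hcard j) : ℕ) := by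
    simp only [Fin.coe_cast]
    omega
  rw [e2, ptn_Mof σ (Fin.cast hcard j)] at e1
  omega

def Vset (Δ : Finset (Sym2 ℕ)) : Finset ℕ := Δ.biUnion (fun e => {e.inf, e.sup})

lemma mem_Vset {Δ : Finset (Sym2 ℕ)} {v : ℕ} : v ∈ Vset Δ ↔ InMatch Δ v := by
  simp only [Vset, Finset.mem_biUnion, Finset.mem_insert, Finset.mem_singleton, InMatch]
  constructor
  · rintro ⟨e, he, hv⟩
    exact ⟨e, he, mem_iff'.mpr hv⟩
  · rintro ⟨e, he, hv⟩
    exact ⟨e, he, mem_iff'.mp hv⟩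

lemma card_Vset {Δ : Finset (Sym2 ℕ)} (h : IsMatching Δ) : (Vset Δ).card = 2 * Δ.card := by
  rw [Vset, Finset.card_biUnion]
  · rw [Finset.sum_congr rfl (g := fun _ => 2), Finset.sum_const, smul_eq_mul, mul_comm]
    intro e he
    rw [Finset.card_insert_of_notMem (by simp [(edge_inf_lt_sup h he).ne]),
      Finset.card_singleton]
  · intro e he f hf hef
    simp only [Finset.disjoint_left, Finset.mem_insert, Finset.mem_singleton]
    intro v hv hv'
    have h1 : v ∈ e := by rcases hv with rfl | rfl; exacts [inf_mem e, sup_mem e]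
    have h2 : v ∈ f := by rcases hv' with rfl | rfl; exacts [inf_mem f, sup_mem f]
    exact h.2 e he f hf hef v h1 h2

lemma eq_Mof {n : ℕ} {Γ : Finset (Sym2 ℕ)} {e : ℕ → ℕ} (hΓ : IsIntertwined n Γ e)
    {π : Equiv.Perm (Fin n)} (hπ : ∀ i : Fin n, (π i : ℕ) + 1 = e (n - (i : ℕ))) :
    Γ = Mof n π := by
  have hsub : Mof n π ⊆ Γ := by
    intro ed hed
    obtain ⟨j, rfl⟩ := mem_Mof.mp hed
    have hj := j.isLt
    have h3 := (hΓ.2.2 (n - (j:ℕ)) (by omega) (by omega)).2.2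
    have h5 : (π j : ℕ) + 1 = e (n - (j:ℕ)) := hπ j
    have h4 : 2*n - (j:ℕ) = n + (n - (j:ℕ)) := by omega
    rw [h4, h5]
    exact h3
  have hV : Vset Γ = Finset.Icc 1 (2*n) := by
    ext v
    rw [mem_Vset, hΓ.2.1 v, Finset.mem_Icc]
  have hcard : Γ.card = n := by
    have := card_Vset hΓ.1
    rw [hV, Nat.card_Icc] at this
    omega
  exact (Finset.eq_of_subset_of_card_le hsub (by rw [hcard, card_Mof])).symm

lemma phiS_of_intertwined {n : ℕ} {Γ : Finset (Sym2 ℕ)} {e : ℕ → ℕ}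
    (hΓ : IsIntertwined n Γ e) {π : Equiv.Perm (Fin n)}
    (hπ : ∀ i : Fin n, (π i : ℕ) + 1 = e (n - (i : ℕ))) (h : IsMatching Γ) :
    phiS Γ h = ⟨n, π⟩ := by
  have hE := eq_Mof hΓ hπ
  subst hE
  exact phiS_Mof n π

/-- adding missing edges one at a time -/
lemma grow {A B : Finset (Sym2 ℕ)} (hB : IsMatching B) (hAB : A ⊆ B) : MatchLe A B := by
  have hgen : ∀ k (A : Finset (Sym2 ℕ)), (B \ A).card = k → A ⊆ B → MatchLe A B := by
    intro k
    induction k with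
    | zero =>
      intro A hc hAB
      have he : B \ A = ∅ := Finset.card_eq_zero.mp hc
      have : B ⊆ A := fun x hx => by
        by_contra hxa
        have : x ∈ B \ A := Finset.mem_sdiff.mpr ⟨hx, hxa⟩
        rw [he] at this
        exact absurd this (Finset.notMem_empty x)
      rw [Finset.Subset.antisymm hAB this]
      exact Relation.ReflTransGen.refl
    | succ k ih =>
      intro A hc hAB
      have hne : (B \ A).Nonempty := Finset.card_pos.mp (by omega)
      obtain ⟨ed, hed⟩ := hne
      rw [Finset.mem_sdiff] at hed
      have hfresh : ∀ v : ℕ, v ∈ ed → ¬ InMatch A v := by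
        rintro v hv ⟨f, hf, hvf⟩
        have : f = ed := edge_unique hB (hAB hf) hed.1 hvf hv
        exact hed.2 (this ▸ hf)
      have hstep : MatchStep A (insert ed A) := by
        left
        exact ⟨ed.inf, ed.sup, (edge_inf_lt_sup hB hed.1).ne,
          hfresh _ (inf_mem ed), hfresh _ (sup_mem ed), by rw [sym2_eq]⟩
      have hcard : (B \ insert ed A).card = k := by
        rw [Finset.sdiff_insert, Finset.card_erase_of_mem (Finset.mem_sdiff.mpr hed), hc]
        omega
      exact Relation.ReflTransGen.head hstep
        (ih (insert ed A) hcard (Finset.insert_subset hed.1 hAB))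
  exact hgen _ A rfl hAB

/-- sliding one endpoint up through free vertices -/
lemma shift {Δ : Finset (Sym2 ℕ)} {i x y : ℕ} (hxy : x ≤ y) (hE : s(i,x) ∈ Δ)
    (hfree : ∀ v, x < v → v ≤ y → ¬ InMatch Δ v) :
    MatchLe Δ (insert s(i,y) (Δ.erase s(i,x))) := by
  obtain ⟨d, rfl⟩ : ∃ d, y = x + d := ⟨y - x, by omega⟩
  clear hxy
  induction d generalizing Δ x with
  | zero =>
    rw [Nat.add_zero, Finset.insert_erase hE]
    exact Relation.ReflTransGen.refl
  | succ d ih =>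
    have h1 : ¬ InMatch Δ (x+1) := hfree (x+1) (by omega) (by omega)
    have hstep : MatchStep Δ (insert s(i,x+1) (Δ.erase s(i,x))) :=
      Or.inr (Or.inl ⟨i, x, hE, h1, rfl⟩)
    have hiM : InMatch Δ i := ⟨s(i,x), hE, by simp⟩
    have hni : s(i,x+1) ∉ Δ := fun hc => h1 ⟨s(i,x+1), hc, by simp⟩
    have hE1 : s(i,x+1) ∈ insert s(i,x+1) (Δ.erase s(i,x)) := Finset.mem_insert_self _ _
    have hfree1 : ∀ v, x+1 < v → v ≤ (x+1) + d →
        ¬ InMatch (insert s(i,x+1) (Δ.erase s(i,x))) v := by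
      rintro v hv1 hv2 ⟨f, hf, hvf⟩
      rcases Finset.mem_insert.mp hf with rfl | hf'
      · have : v = i ∨ v = x + 1 := by simpa using hvf
        rcases this with rfl | rfl
        · exact hfree v (by omega) (by omega) hiM
        · omega
      · exact hfree v (by omega) (by omega) ⟨f, Finset.mem_of_mem_erase hf', hvf⟩
    have heq : (insert s(i,x+1) (Δ.erase s(i,x))).erase s(i,x+1) = Δ.erase s(i,x) := by
      apply Finset.erase_insert
      intro hc
      exact hni (Finset.mem_of_mem_erase hc)
    have := ih hE1 hfree1
    rw [heq] at this
    have harith : x + (d+1) = (x+1) + d := by omega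
    rw [harith]
    exact Relation.ReflTransGen.head hstep this

/-- a family of chords -/
def fam {N : ℕ} (gL gR : Fin N → ℕ) : Finset (Sym2 ℕ) :=
  (univ : Finset (Fin N)).image (fun j => s(gL j, gR j))

lemma mem_fam {N : ℕ} {gL gR : Fin N → ℕ} {e : Sym2 ℕ} :
    e ∈ fam gL gR ↔ ∃ j, s(gL j, gR j) = e := by simp [fam]

lemma inMatch_fam {N : ℕ} {gL gR : Fin N → ℕ} {v : ℕ} :
    InMatch (fam gL gR) v ↔ ∃ j, v = gL j ∨ v = gR j := by
  constructor
  · rintro ⟨e, he, hv⟩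
    obtain ⟨j, rfl⟩ := mem_fam.mp he
    simp only [Sym2.mem_iff] at hv
    exact ⟨j, hv⟩
  · rintro ⟨j, hv⟩
    exact ⟨s(gL j, gR j), mem_fam.mpr ⟨j, rfl⟩, by simpa using hv⟩

lemma stageR {N : ℕ} (gL gR hR : Fin N → ℕ)
    (hA : ∀ j j' : Fin N, gL j < gR j' ∧ gL j < hR j')
    (hBg : ∀ j j' : Fin N, j < j' → gR j' < gR j)
    (hBh : ∀ j j' : Fin N, j < j' → hR j' < hR j)
    (hC : ∀ j, gR j ≤ hR j)
    (hD : Function.Injective gL) :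
    MatchLe (fam gL gR) (fam gL hR) := by
  set cur : ℕ → Fin N → ℕ := fun t j => if (j:ℕ) < t then hR j else gR j with hcur
  have hcurN : cur N = hR := by
    funext j; simp [hcur, j.isLt]
  have hcur0 : cur 0 = gR := by
    funext j; simp [hcur]
  have main : ∀ k t, N = t + k → MatchLe (fam gL (cur t)) (fam gL hR) := by
    intro k
    induction k with
    | zero =>
      intro t ht
      rw [show t = N by omega, hcurN]
      exact Relation.ReflTransGen.refl
    | succ k ih =>
      intro t ht
      have htN : t < N := by omega
      set jt : Fin N := ⟨t, htN⟩ with hjt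
      have hcjt : cur t jt = gR jt := by simp [hcur, hjt]
      have hmemE : s(gL jt, gR jt) ∈ fam gL (cur t) := mem_fam.mpr ⟨jt, by rw [hcjt]⟩
      have hfresh : ∀ v, gR jt < v → v ≤ hR jt → ¬ InMatch (fam gL (cur t)) v := by
        intro v hv1 hv2 hIn
        obtain ⟨j, hj⟩ := inMatch_fam.mp hIn
        rcases hj with rfl | rfl
        · have := (hA j jt).1; omega
        · by_cases hjlt : (j:ℕ) < t
          · have h2 : cur t j = hR j := by simp [hcur, hjlt]
            have h3 : hR jt < hR j := hBh j jt hjlt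
            omega
          · have hge : t ≤ (j:ℕ) := not_lt.mp hjlt
            rcases Nat.eq_or_lt_of_le hge with heq | hlt
            · have : j = jt := Fin.ext heq.symm
              rw [this, hcjt] at hv1
              omega
            · have h3 : gR j < gR jt := hBg jt j hlt
              have h2 : cur t j = gR j := by simp [hcur, hjlt]
              omega
      have hshift := shift (hC jt) hmemE hfresh
      have hcc : ∀ j : Fin N, j ≠ jt → cur (t+1) j = cur t j := by
        intro j hjne
        have : (j:ℕ) ≠ t := fun hc => hjne (Fin.ext hc)
        simp only [hcur]
        by_cases hlt : (j:ℕ) < t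
        · rw [if_pos hlt, if_pos (by omega)]
        · rw [if_neg hlt, if_neg (by omega)]
      have hct1 : cur (t+1) jt = hR jt := by simp [hcur, hjt]
      have hne_edge : ∀ j : Fin N, j ≠ jt → s(gL j, cur t j) ≠ s(gL jt, gR jt) := by
        intro j hjne hc
        rcases Sym2.eq_iff.mp hc with ⟨h1, _⟩ | ⟨h1, _⟩
        · exact hjne (hD h1)
        · have := (hA j jt).1; omega
      have hseteq : insert s(gL jt, hR jt) ((fam gL (cur t)).erase s(gL jt, gR jt))
          = fam gL (cur (t+1)) := by
        ext e
        simp only [Finset.mem_insert, Finset.mem_erase, mem_fam]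
        constructor
        · rintro (rfl | ⟨hne, ⟨j, rfl⟩⟩)
          · exact ⟨jt, by rw [hct1]⟩
          · have hjne : j ≠ jt := by
              rintro rfl
              rw [hcjt] at hne
              exact hne rfl
            exact ⟨j, by rw [hcc j hjne]⟩
        · rintro ⟨j, rfl⟩
          by_cases hje : j = jt
          · subst hje
            left
            rw [hct1]
          · right
            rw [hcc j hje]
            exact ⟨hne_edge j hje, ⟨j, rfl⟩⟩
      rw [hseteq] at hshift
      exact Relation.ReflTransGen.trans hshift (ih (t+1) (by omega))
  have := main N 0 (by omega)
  rwa [hcur0] at this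

lemma stageL {N : ℕ} (gL hL gR : Fin N → ℕ)
    (hA : ∀ j j' : Fin N, gL j < gR j' ∧ hL j < gR j')
    (hiso : ∀ j j' : Fin N, gL j < gL j' ↔ hL j < hL j')
    (hC : ∀ j, gL j ≤ hL j)
    (hD : Function.Injective gL)
    (hRinj : Function.Injective gR) :
    MatchLe (fam gL gR) (fam hL gR) := by
  have hLinj : Function.Injective hL := by
    intro j j' hjj
    by_contra hne
    rcases lt_trichotomy (gL j) (gL j') with hc | hc | hc
    · rw [hiso] at hc; omega
    · exact hne (hD hc)
    · rw [hiso] at hc; omega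
  set cur : ℕ → Fin N → ℕ := fun t j => if t ≤ hL j then hL j else gL j with hcur
  have hcur0 : cur 0 = hL := by
    funext j; simp [hcur]
  set T : ℕ := (univ : Finset (Fin N)).sup hL + 1 with hT
  have hcurT : cur T = gL := by
    funext j
    have : hL j < T := by
      have := Finset.le_sup (f := hL) (Finset.mem_univ j)
      omega
    simp [hcur]
    omega
  have main : ∀ t, MatchLe (fam (cur t) gR) (fam (cur 0) gR) := by
    intro t
    induction t with
    | zero => exact Relation.ReflTransGen.refl
    | succ t ih =>
      by_cases hex : ∃ j0, hL j0 = t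
      · obtain ⟨j0, hj0⟩ := hex
        have hcj0 : cur (t+1) j0 = gL j0 := by simp [hcur]; omega
        have hctj0 : cur t j0 = hL j0 := by simp [hcur]; omega
        have hcc : ∀ j : Fin N, j ≠ j0 → cur (t+1) j = cur t j := by
          intro j hjne
          have hne2 : hL j ≠ t := fun hc => hjne (hLinj (by rw [hj0, hc]))
          simp only [hcur]
          by_cases hle : t + 1 ≤ hL j
          · rw [if_pos hle, if_pos (by omega)]
          · rw [if_neg hle, if_neg (by omega)]
        have hmemE : s(gR j0, gL j0) ∈ fam (cur (t+1)) gR := by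
          rw [Sym2.eq_swap]
          exact mem_fam.mpr ⟨j0, by rw [hcj0]⟩
        have hfresh : ∀ v, gL j0 < v → v ≤ hL j0 → ¬ InMatch (fam (cur (t+1)) gR) v := by
          intro v hv1 hv2 hIn
          obtain ⟨j, hj⟩ := inMatch_fam.mp hIn
          rcases hj with rfl | rfl
          · by_cases hje : j = j0
            · subst hje; omega
            · by_cases hle : t + 1 ≤ hL j
              · have : cur (t+1) j = hL j := by simp [hcur]; omega
                omega
              · have h2 : cur (t+1) j = gL j := by simp [hcur]; omega
                have h3 : hL j ≠ hL j0 := fun hc => hje (hLinj hc)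
                have h4 : hL j < hL j0 := by omega
                have h5 : gL j < gL j0 := (hiso j j0).mpr h4
                omega
          · have := (hA j0 j).2
            omega
        have hshift := shift (hC j0) hmemE hfresh
        have hne_edge : ∀ j : Fin N, j ≠ j0 → s(cur (t+1) j, gR j) ≠ s(gL j0, gR j0) := by
          intro j hjne hc
          rcases Sym2.eq_iff.mp hc with ⟨_, h2⟩ | ⟨h1, _⟩
          · exact hjne (hRinj h2)
          · have h3 : cur (t+1) j < gR j0 := by
              by_cases hle : t + 1 ≤ hL j
              · have : cur (t+1) j = hL j := by simp [hcur]; omega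
                have := (hA j j0).2; omega
              · have : cur (t+1) j = gL j := by simp [hcur]; omega
                have := (hA j j0).1; omega
            omega
        have hseteq : insert s(gR j0, hL j0) ((fam (cur (t+1)) gR).erase s(gR j0, gL j0))
            = fam (cur t) gR := by
          rw [Sym2.eq_swap, @Sym2.eq_swap ℕ (gR j0) (gL j0)]
          ext e
          simp only [Finset.mem_insert, Finset.mem_erase, mem_fam]
          constructor
          · rintro (rfl | ⟨hne, ⟨j, rfl⟩⟩)
            · exact ⟨j0, by rw [hctj0]⟩
            · have hjne : j ≠ j0 := by
                rintro rfl
                rw [hcj0] at hne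
                exact hne rfl
              exact ⟨j, by rw [← hcc j hjne]⟩
          · rintro ⟨j, rfl⟩
            by_cases hje : j = j0
            · subst hje
              left
              rw [hctj0]
            · right
              rw [← hcc j hje]
              exact ⟨hne_edge j hje, ⟨j, rfl⟩⟩
        rw [hseteq] at hshift
        exact Relation.ReflTransGen.trans hshift ih
      · have : cur (t+1) = cur t := by
          funext j
          have hne2 : hL j ≠ t := fun hc => hex ⟨j, hc⟩
          simp only [hcur]
          by_cases hle : t + 1 ≤ hL j
          · rw [if_pos hle, if_pos (by omega)]
          · rw [if_neg hle, if_neg (by omega)]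
        rw [this]
        exact ih
  have := main T
  rwa [hcurT, hcur0] at this

lemma strictMono_fin_le {n m : ℕ} {f : Fin n → Fin m} (hf : StrictMono f) :
    ∀ j : Fin n, (j : ℕ) ≤ (f j : ℕ) := by
  have key : ∀ (t : ℕ) (ht : t < n), t ≤ (f ⟨t, ht⟩ : ℕ) := by
    intro t
    induction t with
    | zero => omega
    | succ t ih =>
      intro ht
      have h1 := ih (by omega)
      have h2 : f ⟨t, by omega⟩ < f ⟨t+1, ht⟩ := hf (by simp [Fin.lt_def])
      rw [Fin.lt_def] at h2
      omega
  intro j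
  have := key (j : ℕ) j.isLt
  simpa using this

lemma strictMono_fin_ge {n m : ℕ} {f : Fin n → Fin m} (hf : StrictMono f) :
    ∀ j : Fin n, (f j : ℕ) ≤ m - 1 - ((n - 1) - (j : ℕ)) := by
  intro j
  have hrev : StrictMono (fun j : Fin n => (f j.rev).rev) := by
    intro a b hab
    simp only [Fin.lt_def, Fin.val_rev]
    have h1 : b.rev < a.rev := by
      rw [Fin.lt_def]
      simp only [Fin.val_rev]
      have := a.isLt; have := b.isLt; rw [Fin.lt_def] at hab
      omega
    have h2 := hf h1
    rw [Fin.lt_def] at h2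
    have := (f b.rev).isLt; have := (f a.rev).isLt
    omega
  have := strictMono_fin_le hrev j.rev
  simp only [Fin.val_rev, Fin.rev_rev] at this
  have := j.isLt
  have := (f j).isLt
  omega

lemma strictMono_fin_card {n m : ℕ} {f : Fin n → Fin m} (hf : StrictMono f) : n ≤ m := by
  rcases Nat.eq_zero_or_pos n with rfl | hn
  · omega
  · have h1 := strictMono_fin_le hf ⟨n-1, by omega⟩
    have h2 := (f ⟨n-1, by omega⟩).isLt
    simp at h1
    omega

lemma typeIBelow_mono {n m : ℕ} {σ : Equiv.Perm (Fin n)} {τ : Equiv.Perm (Fin m)}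
    (h : TypeIBelow σ τ) : MatchLe (Mof n σ) (Mof m τ) := by
  obtain ⟨f, hmono, hdom, hiso⟩ := h
  have hnm : n ≤ m := strictMono_fin_card hmono
  set gL : Fin n → ℕ := fun j => (σ j : ℕ) + 1 with hgL
  set gR : Fin n → ℕ := fun j => 2*n - (j : ℕ) with hgR
  set hR : Fin n → ℕ := fun j => 2*m - ((f j) : ℕ) with hhR
  set hL : Fin n → ℕ := fun j => (τ (f j) : ℕ) + 1 with hhL
  have hfacts : ∀ j : Fin n, (σ j : ℕ) < n ∧ (j : ℕ) < n ∧ ((f j) : ℕ) < m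
      ∧ (τ (f j) : ℕ) < m := fun j => ⟨(σ j).isLt, j.isLt, (f j).isLt, (τ (f j)).isLt⟩
  have hD : Function.Injective gL := by
    intro j j' hjj
    simp only [hgL] at hjj
    exact σ.injective (Fin.ext (by omega))
  have step1 : MatchLe (fam gL gR) (fam gL hR) := by
    apply stageR
    · intro j j'
      have := hfacts j; have := hfacts j'
      simp only [hgL, hgR, hhR]
      constructor <;> omega
    · intro j j' hjj
      rw [Fin.lt_def] at hjj
      have := hfacts j; have := hfacts j'
      simp only [hgR]
      omega
    · intro j j' hjj
      have h2 : f j < f j' := hmono hjj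
      rw [Fin.lt_def] at h2
      have := hfacts j; have := hfacts j'
      simp only [hhR]
      omega
    · intro j
      have h1 := strictMono_fin_ge hmono j
      have := hfacts j
      simp only [hgR, hhR]
      omega
    · exact hD
  have step2 : MatchLe (fam gL hR) (fam hL hR) := by
    apply stageL
    · intro j j'
      have := hfacts j; have := hfacts j'
      simp only [hgL, hhL, hhR]
      constructor <;> omega
    · intro j j'
      simp only [hgL, hhL]
      constructor
      · intro hc
        have : σ j < σ j' := by rw [Fin.lt_def]; omega
        have := (hiso j j').mp this
        rw [Fin.lt_def] at this
        omega
      · intro hc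
        have : τ (f j) < τ (f j') := by rw [Fin.lt_def]; omega
        have := (hiso j j').mpr this
        rw [Fin.lt_def] at this
        omega
    · intro j
      have := hdom j
      simp only [hgL, hhL]
      omega
    · exact hD
    · intro j j' hjj
      simp only [hhR] at hjj
      have := hfacts j; have := hfacts j'
      exact hmono.injective (Fin.ext (by omega))
  have step3 : MatchLe (fam hL hR) (Mof m τ) := by
    apply grow (Mof_matching m τ)
    intro e he
    obtain ⟨j, rfl⟩ := mem_fam.mp he
    exact mem_Mof.mpr ⟨f j, rfl⟩
  have hid : Mof n σ = fam gL gR := rfl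
  rw [hid]
  exact Relation.ReflTransGen.trans step1 (Relation.ReflTransGen.trans step2 step3)

lemma permTypeII_mono {k : ℕ} {σ τ : Equiv.Perm (Fin k)}
    (h : PermTypeII σ τ) : MatchStep (Mof k σ) (Mof k τ) := by
  obtain ⟨p, q, hpq, hval, hcond, htau⟩ := h
  have hτ : ∀ j, τ j = σ (Equiv.swap p q j) := by
    intro j
    rw [htau]
    rfl
  have hτp : τ p = σ q := by rw [hτ, Equiv.swap_apply_left]
  have hτq : τ q = σ p := by rw [hτ, Equiv.swap_apply_right]
  have hτo : ∀ j, j ≠ p → j ≠ q → τ j = σ j := by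
    intro j h1 h2
    rw [hτ, Equiv.swap_apply_of_ne_of_ne h1 h2]
  set a : ℕ := (σ p : ℕ) + 1 with ha
  set b : ℕ := (σ q : ℕ) + 1 with hb
  set c : ℕ := 2*k - (q : ℕ) with hc
  set d : ℕ := 2*k - (p : ℕ) with hd
  have hfb : ∀ j : Fin k, (σ j : ℕ) < k ∧ (j:ℕ) < k := fun j => ⟨(σ j).isLt, j.isLt⟩
  have h1 := hfb p; have h2 := hfb q
  have hpq' : (p:ℕ) < (q:ℕ) := hpq
  have hval' : (σ p : ℕ) < (σ q : ℕ) := hval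
  right; right; left
  refine ⟨a, b, c, d, by omega, by omega, by omega, ?_, ?_, ?_, ?_⟩
  · exact mem_Mof.mpr ⟨p, rfl⟩
  · have : s((σ q : ℕ) + 1, 2*k - (q:ℕ)) ∈ Mof k σ := mem_Mof.mpr ⟨q, rfl⟩
    exact this
  · intro v w hv1 hv2 hvw
    obtain ⟨j, hj⟩ := mem_Mof.mp hvw
    have h3 := hfb j
    rcases Sym2.eq_iff.mp hj with ⟨he1, he2⟩ | ⟨he1, he2⟩
    · -- v = σ j + 1, w = 2k - j
      have hσj : (σ p : ℕ) < (σ j : ℕ) ∧ (σ j : ℕ) < (σ q : ℕ) := by omega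
      have hlt1 : σ p < σ j := by rw [Fin.lt_def]; omega
      have hlt2 : σ j < σ q := by rw [Fin.lt_def]; omega
      have := hcond (σ j) hlt1 hlt2
      rw [Equiv.symm_apply_apply] at this
      rw [Fin.lt_def] at this
      omega
    · -- v = 2k - j : impossible since v < b ≤ k < k+1 ≤ 2k - j
      omega
  · -- the finset equation
    simp only [ha, hb, hc, hd]
    ext e
    simp only [Finset.mem_insert, Finset.mem_erase, mem_Mof]
    have hedge_ne : ∀ (j : Fin k) (r : Fin k), j ≠ r →
        s((σ j:ℕ)+1, 2*k - (j:ℕ)) ≠ s((σ r:ℕ)+1, 2*k - (r:ℕ)) := by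
      intro j r hjr hc'
      have h3 := hfb j; have h4 := hfb r
      rcases Sym2.eq_iff.mp hc' with ⟨he1, he2⟩ | ⟨he1, he2⟩
      · exact hjr (Fin.ext (by omega))
      · omega
    constructor
    · rintro ⟨j, rfl⟩
      by_cases hjq : j = q
      · subst hjq
        left
        rw [hτq]
      · by_cases hjp : j = p
        · subst hjp
          right; left
          rw [hτp]
        · right; right
          rw [hτo j hjp hjq]
          exact ⟨hedge_ne j q hjq, hedge_ne j p hjp, j, rfl⟩
    · rintro (rfl | rfl | ⟨hne1, hne2, j, rfl⟩)
      · exact ⟨q, by rw [hτq]⟩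
      · exact ⟨p, by rw [hτp]⟩
      · refine ⟨j, ?_⟩
        have hjp : j ≠ p := by
          rintro rfl
          exact hne2 rfl
        have hjq : j ≠ q := by
          rintro rfl
          exact hne1 rfl
        rw [hτo j hjp hjq]

lemma permLe_imp {x y : Σ n, Equiv.Perm (Fin n)} (h : PermLeI x y) :
    MatchLe (Mof x.1 x.2) (Mof y.1 y.2) := by
  induction h with
  | refl => exact Relation.ReflTransGen.refl
  | tail hab hbc ih =>
    rename_i b c
    refine Relation.ReflTransGen.trans ih ?_
    rcases hbc with hI | ⟨heq, hII⟩
    · exact typeIBelow_mono hI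
    · obtain ⟨k, σ⟩ := b
      obtain ⟨k', τ⟩ := c
      simp only at heq
      subst heq
      have hcongr : Equiv.permCongr (finCongr (rfl : k = k)) σ = σ := by
        ext j
        rfl
      rw [hcongr] at hII
      exact Relation.ReflTransGen.single (permTypeII_mono hII)

/-- existence of two non-overlapping chords -/
def HasDisj (Δ : Finset (Sym2 ℕ)) : Prop := ∃ e ∈ Δ, ∃ f ∈ Δ, e.sup < f.inf

lemma insert2_mem {α : Type*} [DecidableEq α] {s : Finset α} {x y z : α}
    (h : z ∈ s) (h1 : z ≠ x) (h2 : z ≠ y) : z ∈ insert x (insert y s) := by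
  simp [h, h1, h2]

lemma step_matching {Δ Δ' : Finset (Sym2 ℕ)} (hs : MatchStep Δ Δ') (h : IsMatching Δ) :
    IsMatching Δ' := by
  rcases hs with ⟨i, j, hij, hi, hj, rfl⟩ | ⟨i, j, hE, hj, rfl⟩ |
      ⟨a, b, c, d, hab, hbc, hcd, hE1, hE2, hcond, rfl⟩ |
      ⟨a, b, c, d, hab, hbc, hcd, hE1, hE2, hcond, rfl⟩
  · -- Ia
    constructor
    · intro e he
      rcases Finset.mem_insert.mp he with rfl | he'
      · simpa using hij
      · exact h.1 e he'
    · intro e he f hf hef v hv hvf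
      rcases Finset.mem_insert.mp he with rfl | he' <;>
        rcases Finset.mem_insert.mp hf with rfl | hf'
      · exact hef rfl
      · rcases (Sym2.mem_iff).mp hv with rfl | rfl
        · exact hi ⟨f, hf', hvf⟩
        · exact hj ⟨f, hf', hvf⟩
      · rcases (Sym2.mem_iff).mp hvf with rfl | rfl
        · exact hi ⟨e, he', hv⟩
        · exact hj ⟨e, he', hv⟩
      · exact h.2 e he' f hf' hef v hv hvf
  · -- Ib
    have hiM : InMatch Δ i := ⟨s(i,j), hE, by simp⟩
    have hij1 : i ≠ j + 1 := fun hc => hj (hc ▸ hiM)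
    constructor
    · intro e he
      rcases Finset.mem_insert.mp he with rfl | he'
      · simpa using hij1
      · exact h.1 e (Finset.mem_of_mem_erase he')
    · intro e he f hf hef v hv hvf
      rcases Finset.mem_insert.mp he with rfl | he' <;>
        rcases Finset.mem_insert.mp hf with rfl | hf'
      · exact hef rfl
      · have hfΔ := Finset.mem_of_mem_erase hf'
        have hfne := Finset.ne_of_mem_erase hf'
        rcases (Sym2.mem_iff).mp hv with hvi | rfl
        · -- v = i : i ∈ f, f ∈ Δ, f ≠ s(i,j), but i ∈ s(i,j)
          exact h.2 s(i,j) hE f hfΔ hfne.symm v (by simp [hvi]) hvf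
        · exact hj ⟨f, hfΔ, hvf⟩
      · have heΔ := Finset.mem_of_mem_erase he'
        have hene := Finset.ne_of_mem_erase he'
        rcases (Sym2.mem_iff).mp hvf with hvi | rfl
        · exact h.2 s(i,j) hE e heΔ hene.symm v (by simp [hvi]) hv
        · exact hj ⟨e, heΔ, hv⟩
      · exact h.2 e (Finset.mem_of_mem_erase he') f (Finset.mem_of_mem_erase hf') hef v hv hvf
  · -- IIa
    have hvx : ∀ v : ℕ, (v ∈ ({a,b,c,d} : Finset ℕ)) → ∀ e ∈ Δ, v ∈ e →
        (e = s(a,d) ∨ e = s(b,c)) := by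
      intro v hv e he hve
      simp only [Finset.mem_insert, Finset.mem_singleton] at hv
      rcases hv with rfl | rfl | rfl | rfl
      · exact Or.inl (edge_unique h he hE1 hve (by simp))
      · exact Or.inr (edge_unique h he hE2 hve (by simp))
      · exact Or.inr (edge_unique h he hE2 hve (by simp))
      · exact Or.inl (edge_unique h he hE1 hve (by simp))
    constructor
    · intro e he
      simp only [Finset.mem_insert] at he
      rcases he with rfl | rfl | he'
      · simp only [Sym2.mk_isDiag_iff]; omega
      · simp only [Sym2.mk_isDiag_iff]; omega
      · exact h.1 e (Finset.mem_of_mem_erase (Finset.mem_of_mem_erase he'))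
    · intro e he f hf hef v hv hvf
      simp only [Finset.mem_insert, Finset.mem_erase] at he hf
      have hmem4 : ∀ g : Sym2 ℕ, (g = s(a,c) ∨ g = s(b,d)) → ∀ w, w ∈ g →
          w ∈ ({a,b,c,d} : Finset ℕ) := by
        rintro g (rfl | rfl) w hw <;> simp only [Sym2.mem_iff] at hw <;>
          rcases hw with rfl | rfl <;> simp
      rcases he with rfl | rfl | ⟨hne1, hne2, he'⟩ <;>
        rcases hf with rfl | rfl | ⟨hfe1, hfe2, hf'⟩
      · exact hef rfl
      · simp only [Sym2.mem_iff] at hv hvf; omega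
      · rcases hvx v (hmem4 _ (Or.inl rfl) v hv) f hf' hvf with rfl | rfl
        · exact hfe2 rfl
        · exact hfe1 rfl
      · simp only [Sym2.mem_iff] at hv hvf; omega
      · exact hef rfl
      · rcases hvx v (hmem4 _ (Or.inr rfl) v hv) f hf' hvf with rfl | rfl
        · exact hfe2 rfl
        · exact hfe1 rfl
      · rcases hvx v (hmem4 _ (Or.inl rfl) v hvf) e he' hv with rfl | rfl
        · exact hne2 rfl
        · exact hne1 rfl
      · rcases hvx v (hmem4 _ (Or.inr rfl) v hvf) e he' hv with rfl | rfl
        · exact hne2 rfl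
        · exact hne1 rfl
      · exact h.2 e he' f hf' hef v hv hvf
  · -- IIb
    have hvx : ∀ v : ℕ, (v ∈ ({a,b,c,d} : Finset ℕ)) → ∀ e ∈ Δ, v ∈ e →
        (e = s(a,c) ∨ e = s(b,d)) := by
      intro v hv e he hve
      simp only [Finset.mem_insert, Finset.mem_singleton] at hv
      rcases hv with rfl | rfl | rfl | rfl
      · exact Or.inl (edge_unique h he hE1 hve (by simp))
      · exact Or.inr (edge_unique h he hE2 hve (by simp))
      · exact Or.inl (edge_unique h he hE1 hve (by simp))
      · exact Or.inr (edge_unique h he hE2 hve (by simp))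
    constructor
    · intro e he
      simp only [Finset.mem_insert] at he
      rcases he with rfl | rfl | he'
      · simp only [Sym2.mk_isDiag_iff]; omega
      · simp only [Sym2.mk_isDiag_iff]; omega
      · exact h.1 e (Finset.mem_of_mem_erase (Finset.mem_of_mem_erase he'))
    · intro e he f hf hef v hv hvf
      simp only [Finset.mem_insert, Finset.mem_erase] at he hf
      have hmem4 : ∀ g : Sym2 ℕ, (g = s(a,b) ∨ g = s(c,d)) → ∀ w, w ∈ g →
          w ∈ ({a,b,c,d} : Finset ℕ) := by
        rintro g (rfl | rfl) w hw <;> simp only [Sym2.mem_iff] at hw <;>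
          rcases hw with rfl | rfl <;> simp
      rcases he with rfl | rfl | ⟨hne1, hne2, he'⟩ <;>
        rcases hf with rfl | rfl | ⟨hfe1, hfe2, hf'⟩
      · exact hef rfl
      · simp only [Sym2.mem_iff] at hv hvf; omega
      · rcases hvx v (hmem4 _ (Or.inl rfl) v hv) f hf' hvf with rfl | rfl
        · exact hfe2 rfl
        · exact hfe1 rfl
      · simp only [Sym2.mem_iff] at hv hvf; omega
      · exact hef rfl
      · rcases hvx v (hmem4 _ (Or.inr rfl) v hv) f hf' hvf with rfl | rfl
        · exact hfe2 rfl
        · exact hfe1 rfl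
      · rcases hvx v (hmem4 _ (Or.inl rfl) v hvf) e he' hv with rfl | rfl
        · exact hne2 rfl
        · exact hne1 rfl
      · rcases hvx v (hmem4 _ (Or.inr rfl) v hvf) e he' hv with rfl | rfl
        · exact hne2 rfl
        · exact hne1 rfl
      · exact h.2 e he' f hf' hef v hv hvf

lemma step_hasDisj {Δ Δ' : Finset (Sym2 ℕ)} (hs : MatchStep Δ Δ') (hd : HasDisj Δ) :
    HasDisj Δ' := by
  obtain ⟨e, he, f, hf, hef⟩ := hd
  have hinfsup : ∀ g : Sym2 ℕ, g.inf ≤ g.sup := Sym2.inf_le_sup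
  rcases hs with ⟨i, j, hij, hi, hj, rfl⟩ | ⟨i, j, hE, hj, rfl⟩ |
      ⟨a, b, c, d, hab, hbc, hcd, hE1, hE2, hcond, rfl⟩ |
      ⟨a, b, c, d, hab, hbc, hcd, hE1, hE2, hcond, rfl⟩
  · exact ⟨e, Finset.mem_insert_of_mem he, f, Finset.mem_insert_of_mem hf, hef⟩
  · -- Ib
    have hj1 : ∀ g ∈ Δ, ∀ v ∈ g, v ≠ j + 1 := by
      rintro g hg v hv rfl
      exact hj ⟨g, hg, hv⟩
    have hsupIJ : (s(i,j)).sup = max i j := by simp [sup_eq_max]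
    have hinfIJ : (s(i,j)).inf = min i j := by simp [inf_eq_min]
    have hsup' : (s(i,j+1)).sup = max i (j+1) := by simp [sup_eq_max]
    have hinf' : (s(i,j+1)).inf = min i (j+1) := by simp [inf_eq_min]
    have hnew : s(i,j+1) ∈ insert s(i,j+1) (Δ.erase s(i,j)) := Finset.mem_insert_self _ _
    by_cases he1 : e = s(i,j)
    · subst he1
      have hfne : f ≠ s(i,j) := by
        rintro rfl
        omega
      have hfi : f.inf ≠ j + 1 := hj1 f hf f.inf (inf_mem f)
      refine ⟨s(i,j+1), hnew, f, Finset.mem_insert_of_mem (Finset.mem_erase.mpr ⟨hfne, hf⟩), ?_⟩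
      omega
    · by_cases hf1 : f = s(i,j)
      · subst hf1
        refine ⟨e, Finset.mem_insert_of_mem (Finset.mem_erase.mpr ⟨he1, he⟩), s(i,j+1), hnew, ?_⟩
        omega
      · exact ⟨e, Finset.mem_insert_of_mem (Finset.mem_erase.mpr ⟨he1, he⟩), f,
          Finset.mem_insert_of_mem (Finset.mem_erase.mpr ⟨hf1, hf⟩), hef⟩
  · -- IIa : moved s(a,d), s(b,c) ; new s(a,c), s(b,d)
    have h1 : (s(a,d)).inf = a ∧ (s(a,d)).sup = d := by
      constructor <;> simp [inf_eq_min, sup_eq_max] <;> omega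
    have h2 : (s(b,c)).inf = b ∧ (s(b,c)).sup = c := by
      constructor <;> simp [inf_eq_min, sup_eq_max] <;> omega
    have h3 : (s(a,c)).inf = a ∧ (s(a,c)).sup = c := by
      constructor <;> simp [inf_eq_min, sup_eq_max] <;> omega
    have h4 : (s(b,d)).inf = b ∧ (s(b,d)).sup = d := by
      constructor <;> simp [inf_eq_min, sup_eq_max] <;> omega
    have hmm : ∀ g, g ∈ Δ → g ≠ s(a,d) → g ≠ s(b,c) →
        g ∈ insert s(a,c) (insert s(b,d) ((Δ.erase s(a,d)).erase s(b,c))) := by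
      intro g hg hg1 hg2
      exact Finset.mem_insert_of_mem (Finset.mem_insert_of_mem
        (Finset.mem_erase.mpr ⟨hg2, Finset.mem_erase.mpr ⟨hg1, hg⟩⟩))
    have hnew1 : s(a,c) ∈ insert s(a,c) (insert s(b,d) ((Δ.erase s(a,d)).erase s(b,c))) :=
      Finset.mem_insert_self _ _
    have hnew2 : s(b,d) ∈ insert s(a,c) (insert s(b,d) ((Δ.erase s(a,d)).erase s(b,c))) :=
      Finset.mem_insert_of_mem (Finset.mem_insert_self _ _)
    by_cases he1 : e = s(a,d)
    · subst he1
      have hf1 : f ≠ s(a,d) := by rintro rfl; omega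
      have hf2 : f ≠ s(b,c) := by rintro rfl; omega
      exact ⟨s(b,d), hnew2, f, hmm f hf hf1 hf2, by omega⟩
    · by_cases he2 : e = s(b,c)
      · subst he2
        have hf1 : f ≠ s(a,d) := by rintro rfl; omega
        have hf2 : f ≠ s(b,c) := by rintro rfl; omega
        exact ⟨s(a,c), hnew1, f, hmm f hf hf1 hf2, by omega⟩
      · by_cases hf1 : f = s(a,d)
        · subst hf1
          have he2' : e ≠ s(b,c) := by rintro rfl; omega
          exact ⟨e, hmm e he he1 he2', s(a,c), hnew1, by omega⟩
        · by_cases hf2 : f = s(b,c)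
          · subst hf2
            exact ⟨e, hmm e he he1 he2, s(b,d), hnew2, by omega⟩
          · exact ⟨e, hmm e he he1 he2, f, hmm f hf hf1 hf2, hef⟩
  · -- IIb : moved s(a,c), s(b,d) ; new s(a,b), s(c,d)
    have h1 : (s(a,c)).inf = a ∧ (s(a,c)).sup = c := by
      constructor <;> simp [inf_eq_min, sup_eq_max] <;> omega
    have h2 : (s(b,d)).inf = b ∧ (s(b,d)).sup = d := by
      constructor <;> simp [inf_eq_min, sup_eq_max] <;> omega
    have h3 : (s(a,b)).inf = a ∧ (s(a,b)).sup = b := by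
      constructor <;> simp [inf_eq_min, sup_eq_max] <;> omega
    have h4 : (s(c,d)).inf = c ∧ (s(c,d)).sup = d := by
      constructor <;> simp [inf_eq_min, sup_eq_max] <;> omega
    have hmm : ∀ g, g ∈ Δ → g ≠ s(a,c) → g ≠ s(b,d) →
        g ∈ insert s(a,b) (insert s(c,d) ((Δ.erase s(a,c)).erase s(b,d))) := by
      intro g hg hg1 hg2
      exact Finset.mem_insert_of_mem (Finset.mem_insert_of_mem
        (Finset.mem_erase.mpr ⟨hg2, Finset.mem_erase.mpr ⟨hg1, hg⟩⟩))
    have hnew1 : s(a,b) ∈ insert s(a,b) (insert s(c,d) ((Δ.erase s(a,c)).erase s(b,d))) :=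
      Finset.mem_insert_self _ _
    have hnew2 : s(c,d) ∈ insert s(a,b) (insert s(c,d) ((Δ.erase s(a,c)).erase s(b,d))) :=
      Finset.mem_insert_of_mem (Finset.mem_insert_self _ _)
    by_cases he1 : e = s(a,c)
    · subst he1
      have hf1 : f ≠ s(a,c) := by rintro rfl; omega
      have hf2 : f ≠ s(b,d) := by rintro rfl; omega
      exact ⟨s(a,b), hnew1, f, hmm f hf hf1 hf2, by omega⟩
    · by_cases he2 : e = s(b,d)
      · subst he2
        have hf1 : f ≠ s(a,c) := by rintro rfl; omega
        have hf2 : f ≠ s(b,d) := by rintro rfl; omega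
        exact ⟨s(a,b), hnew1, f, hmm f hf hf1 hf2, by omega⟩
      · by_cases hf1 : f = s(a,c)
        · subst hf1
          have he2' : e ≠ s(b,d) := by rintro rfl; omega
          exact ⟨e, hmm e he he1 he2', s(a,b), hnew1, by omega⟩
        · by_cases hf2 : f = s(b,d)
          · subst hf2
            exact ⟨e, hmm e he he1 he2, s(c,d), hnew2, by omega⟩
          · exact ⟨e, hmm e he he1 he2, f, hmm f hf hf1 hf2, hef⟩

lemma filter_lt_emb {s : Finset ℕ} {k : ℕ} (hc : s.card = k) (i : Fin k) :
    (s.filter (fun x => x < s.orderEmbOfFin hc i)).card = (i : ℕ) := by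
  have him : s.filter (fun x => x < s.orderEmbOfFin hc i)
      = (Finset.Iio i).image (s.orderEmbOfFin hc) := by
    ext x
    simp only [Finset.mem_filter, Finset.mem_image, Finset.mem_Iio]
    constructor
    · rintro ⟨hxs, hxlt⟩
      have : x ∈ Set.range (s.orderEmbOfFin hc) := by rw [range_orderEmbOfFin]; exact hxs
      obtain ⟨t, rfl⟩ := this
      exact ⟨t, (s.orderEmbOfFin hc).strictMono.lt_iff_lt.mp hxlt, rfl⟩
    · rintro ⟨t, ht, rfl⟩
      exact ⟨orderEmbOfFin_mem _ _ _, (s.orderEmbOfFin hc).strictMono ht⟩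
  rw [him, Finset.card_image_of_injective _ (s.orderEmbOfFin hc).injective, Fin.card_Iio]

lemma index_le_index {s s' : Finset ℕ} (hss : s ⊆ s') {k k' : ℕ} (hc : s.card = k)
    (hc' : s'.card = k') {i : Fin k} {i' : Fin k'}
    (hx : s.orderEmbOfFin hc i = s'.orderEmbOfFin hc' i') : (i : ℕ) ≤ (i' : ℕ) := by
  rw [← filter_lt_emb hc i, ← filter_lt_emb hc' i']
  apply Finset.card_le_card
  intro x hx'
  rw [Finset.mem_filter] at hx' ⊢
  exact ⟨hss hx'.1, by rw [← hx]; exact hx'.2⟩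

lemma phi_Ia {Δ Δ' : Finset (Sym2 ℕ)} (h : IsMatching Δ) (h' : IsMatching Δ')
    (hm : TypeIa Δ Δ') : TypeIBelow (phi h) (phi h') := by
  obtain ⟨i, j, hij, hi, hj, rfl⟩ := hm
  have hLsub : lefts Δ ⊆ lefts (insert s(i,j) Δ) := by
    rw [lefts, lefts, Finset.image_insert]
    exact Finset.subset_insert _ _
  have hRsub : rights Δ ⊆ rights (insert s(i,j) Δ) := by
    rw [rights, rights, Finset.image_insert]
    exact Finset.subset_insert _ _
  have hptn : ∀ r ∈ rights Δ, ptn (insert s(i,j) Δ) r = ptn Δ r := by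
    intro r hr
    obtain ⟨e, he, rfl⟩ := mem_rights_iff.mp hr
    rw [ptn_eq h' (Finset.mem_insert_of_mem he), ptn_eq h he]
  set f : Fin Δ.card → Fin (insert s(i,j) Δ).card := fun t =>
    (((rights (insert s(i,j) Δ)).orderIsoOfFin (card_rights h')).symm
      ⟨Remb h t.rev, hRsub (Remb_mem h t.rev)⟩).rev with hf
  have hfr : ∀ t, Remb h' ((f t).rev) = Remb h t.rev := by
    intro t
    simp only [hf, Fin.rev_rev]
    exact congrArg Subtype.val
      (((rights (insert s(i,j) Δ)).orderIsoOfFin (card_rights h')).apply_symm_apply _)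
  have hmono : StrictMono f := by
    intro t t' htt
    rw [← Fin.rev_lt_rev, ← (Remb h').lt_iff_lt, hfr, hfr, (Remb h).lt_iff_lt,
      Fin.rev_lt_rev]
    exact htt
  have hkey : ∀ t, Lemb h' (phi h' (f t)) = Lemb h (phi h t) := by
    intro t
    rw [Lemb_phi, Lemb_phi, hfr, hptn _ (Remb_mem h t.rev)]
  refine ⟨f, hmono, ?_, ?_⟩
  · intro t
    exact index_le_index hLsub (card_lefts h) (card_lefts h') (hkey t).symm
  · intro t t'
    rw [← (Lemb h).lt_iff_lt, ← hkey t, ← hkey t', (Lemb h').lt_iff_lt]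

lemma phi_Ib {Δ Δ' : Finset (Sym2 ℕ)} (h : IsMatching Δ) (h' : IsMatching Δ')
    (hm : TypeIb Δ Δ') : phiS Δ h = phiS Δ' h' := by
  obtain ⟨i, j, hE, hj, rfl⟩ := hm
  have hii : i ≠ j := by
    have := h.1 _ hE
    simpa [Sym2.mk_isDiag_iff] using this
  have hIMi : InMatch Δ i := ⟨s(i,j), hE, by simp⟩
  have hij1 : i ≠ j + 1 := fun hc => hj (hc ▸ hIMi)
  have hnotj1 : ∀ e ∈ Δ, (j+1) ∉ e := fun e he hc => hj ⟨e, he, hc⟩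
  have hEuniq : ∀ e ∈ Δ, j ∈ e → e = s(i,j) := fun e he hje =>
    edge_unique h he hE hje (by simp)
  have hEuniq' : ∀ e ∈ Δ, i ∈ e → e = s(i,j) := fun e he hie =>
    edge_unique h he hE hie (by simp)
  have hE1mem : s(i,j+1) ∈ insert s(i,j+1) (Δ.erase s(i,j)) := Finset.mem_insert_self _ _
  have hmemo : ∀ e ∈ Δ, e ≠ s(i,j) → e ∈ insert s(i,j+1) (Δ.erase s(i,j)) :=
    fun e he hne => Finset.mem_insert_of_mem (Finset.mem_erase.mpr ⟨hne, he⟩)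
  have hmemo' : ∀ e ∈ insert s(i,j+1) (Δ.erase s(i,j)), e = s(i,j+1) ∨ (e ∈ Δ ∧ e ≠ s(i,j)) := by
    intro e he
    rcases Finset.mem_insert.mp he with rfl | he'
    · exact Or.inl rfl
    · exact Or.inr ⟨Finset.mem_of_mem_erase he', Finset.ne_of_mem_erase he'⟩
  rcases Nat.lt_or_ge i j with hcase | hcase
  · -- i < j : right endpoint moves
    have hi0 : (s(i,j)).inf = i := by simp [inf_eq_min]; omega
    have hs0 : (s(i,j)).sup = j := by simp [sup_eq_max]; omega
    have hi1 : (s(i,j+1)).inf = i := by simp [inf_eq_min]; omega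
    have hs1 : (s(i,j+1)).sup = j + 1 := by simp [sup_eq_max]; omega
    apply phiS_congr h h' id (fun x => if x = j then j + 1 else x)
    · -- lefts equal
      rw [Finset.image_id]
      ext v
      rw [mem_lefts_iff, mem_lefts_iff]
      constructor
      · rintro ⟨e, he, rfl⟩
        rcases hmemo' e he with rfl | ⟨heΔ, hne⟩
        · exact ⟨s(i,j), hE, by rw [hi1, hi0]⟩
        · exact ⟨e, heΔ, rfl⟩
      · rintro ⟨e, he, rfl⟩
        by_cases hne : e = s(i,j)
        · subst hne
          exact ⟨s(i,j+1), hE1mem, by rw [hi1, hi0]⟩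
        · exact ⟨e, hmemo e he hne, rfl⟩
    · -- rights
      ext v
      rw [mem_rights_iff]
      simp only [Finset.mem_image]
      constructor
      · rintro ⟨e, he, rfl⟩
        rcases hmemo' e he with rfl | ⟨heΔ, hne⟩
        · exact ⟨j, mem_rights_iff.mpr ⟨s(i,j), hE, hs0⟩, by rw [hs1]; simp⟩
        · refine ⟨e.sup, mem_rights_iff.mpr ⟨e, heΔ, rfl⟩, ?_⟩
          have : e.sup ≠ j := fun hc => hne (hEuniq e heΔ (hc ▸ sup_mem e))
          simp [this]
      · rintro ⟨x, hx, rfl⟩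
        obtain ⟨e, he, rfl⟩ := mem_rights_iff.mp hx
        by_cases hne : e = s(i,j)
        · subst hne
          rw [hs0]
          simp only [if_pos rfl]
          exact ⟨s(i,j+1), hE1mem, hs1⟩
        · have : e.sup ≠ j := fun hc => hne (hEuniq e he (hc ▸ sup_mem e))
          rw [if_neg this]
          exact ⟨e, hmemo e he hne, rfl⟩
    · intro x _ y _ hxy
      exact hxy
    · intro x hx y hy hxy
      have hxm : x ≠ j + 1 := by
        obtain ⟨e, he, rfl⟩ := mem_rights_iff.mp hx
        exact fun hc => hnotj1 e he (hc ▸ sup_mem e)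
      have hym : y ≠ j + 1 := by
        obtain ⟨e, he, rfl⟩ := mem_rights_iff.mp hy
        exact fun hc => hnotj1 e he (hc ▸ sup_mem e)
      by_cases hxj : x = j <;> by_cases hyj : y = j <;>
        simp [hxj, hyj] <;> omega
    · intro r hr
      obtain ⟨e, he, rfl⟩ := mem_rights_iff.mp hr
      by_cases hne : e = s(i,j)
      · subst hne
        have hpe : ptn Δ j = i := by
          have := ptn_eq h hE; rwa [hs0, hi0] at this
        have hpe' : ptn (insert s(i,j+1) (Δ.erase s(i,j))) (j+1) = i := by
          have := ptn_eq h' hE1mem; rwa [hs1, hi1] at this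
        rw [hs0, if_pos rfl, hpe', hpe]
        rfl
      · have hsj : e.sup ≠ j := fun hc => hne (hEuniq e he (hc ▸ sup_mem e))
        rw [if_neg hsj, ptn_eq h he, ptn_eq h' (hmemo e he hne), id]
  · -- j < i : left endpoint moves
    have hji : j < i := by omega
    have hj1i : j + 1 < i := by omega
    have hi0 : (s(i,j)).inf = j := by simp [inf_eq_min]; omega
    have hs0 : (s(i,j)).sup = i := by simp [sup_eq_max]; omega
    have hi1 : (s(i,j+1)).inf = j + 1 := by simp [inf_eq_min]; omega
    have hs1 : (s(i,j+1)).sup = i := by simp [sup_eq_max]; omega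
    apply phiS_congr h h' (fun x => if x = j then j + 1 else x) id
    · -- lefts
      ext v
      rw [mem_lefts_iff]
      simp only [Finset.mem_image]
      constructor
      · rintro ⟨e, he, rfl⟩
        rcases hmemo' e he with rfl | ⟨heΔ, hne⟩
        · exact ⟨j, mem_lefts_iff.mpr ⟨s(i,j), hE, hi0⟩, by rw [hi1]; simp⟩
        · refine ⟨e.inf, mem_lefts_iff.mpr ⟨e, heΔ, rfl⟩, ?_⟩
          have : e.inf ≠ j := fun hc => hne (hEuniq e heΔ (hc ▸ inf_mem e))
          simp [this]
      · rintro ⟨x, hx, rfl⟩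
        obtain ⟨e, he, rfl⟩ := mem_lefts_iff.mp hx
        by_cases hne : e = s(i,j)
        · subst hne
          rw [hi0]
          simp only [if_pos rfl]
          exact ⟨s(i,j+1), hE1mem, hi1⟩
        · have : e.inf ≠ j := fun hc => hne (hEuniq e he (hc ▸ inf_mem e))
          rw [if_neg this]
          exact ⟨e, hmemo e he hne, rfl⟩
    · -- rights equal
      rw [Finset.image_id]
      ext v
      rw [mem_rights_iff, mem_rights_iff]
      constructor
      · rintro ⟨e, he, rfl⟩
        rcases hmemo' e he with rfl | ⟨heΔ, hne⟩
        · exact ⟨s(i,j), hE, by rw [hs1, hs0]⟩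
        · exact ⟨e, heΔ, rfl⟩
      · rintro ⟨e, he, rfl⟩
        by_cases hne : e = s(i,j)
        · subst hne
          exact ⟨s(i,j+1), hE1mem, by rw [hs1, hs0]⟩
        · exact ⟨e, hmemo e he hne, rfl⟩
    · intro x hx y hy hxy
      have hxm : x ≠ j + 1 := by
        obtain ⟨e, he, rfl⟩ := mem_lefts_iff.mp hx
        exact fun hc => hnotj1 e he (hc ▸ inf_mem e)
      have hym : y ≠ j + 1 := by
        obtain ⟨e, he, rfl⟩ := mem_lefts_iff.mp hy
        exact fun hc => hnotj1 e he (hc ▸ inf_mem e)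
      by_cases hxj : x = j <;> by_cases hyj : y = j <;>
        simp [hxj, hyj] <;> omega
    · intro x _ y _ hxy
      exact hxy
    · intro r hr
      obtain ⟨e, he, rfl⟩ := mem_rights_iff.mp hr
      by_cases hne : e = s(i,j)
      · subst hne
        have hpe : ptn Δ i = j := by
          have := ptn_eq h hE; rwa [hs0, hi0] at this
        have hpe' : ptn (insert s(i,j+1) (Δ.erase s(i,j))) i = j + 1 := by
          have := ptn_eq h' hE1mem; rwa [hs1, hi1] at this
        rw [hs0]
        show ptn (insert s(i,j+1) (Δ.erase s(i,j))) i = if ptn Δ i = j then j + 1 else ptn Δ i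
        rw [hpe', hpe, if_pos rfl]
      · have hsi : e.sup ≠ i := fun hc => hne (hEuniq' e he (hc ▸ sup_mem e))
        have hinfj : e.inf ≠ j := fun hc => hne (hEuniq e he (hc ▸ inf_mem e))
        rw [id, ptn_eq h he, ptn_eq h' (hmemo e he hne), if_neg hinfj]

lemma permStep_of_typeII_sigma {k k' : ℕ} (σ : Equiv.Perm (Fin k)) (σ' : Equiv.Perm (Fin k'))
    (p q : Fin k)
    (hsig : (⟨k', σ'⟩ : Σ n, Equiv.Perm (Fin n)) = ⟨k, σ * Equiv.swap p q⟩)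
    (hpq : p < q) (hval : σ p < σ q) (hcond : ∀ v, σ p < v → v < σ q → σ.symm v < q) :
    PermStep ⟨k, σ⟩ ⟨k', σ'⟩ := by
  obtain ⟨h1, h2⟩ := Sigma.mk.inj_iff.mp hsig
  subst h1
  have h3 : σ' = σ * Equiv.swap p q := eq_of_heq h2
  subst h3
  right
  refine ⟨rfl, ?_⟩
  have heq : Equiv.permCongr (finCongr rfl) σ = σ := Equiv.ext fun _ => rfl
  rw [heq]
  exact ⟨p, q, hpq, hval, hcond, rfl⟩

lemma phi_IIa {Δ Δ' : Finset (Sym2 ℕ)} (h : IsMatching Δ) (h' : IsMatching Δ')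
    (hm : TypeIIa Δ Δ') : PermStep (phiS Δ h) (phiS Δ' h') := by
  obtain ⟨a, b, c, d, hab, hbc, hcd, hE1, hE2, hcond, rfl⟩ := hm
  set Δ' := insert s(a,c) (insert s(b,d) ((Δ.erase s(a,d)).erase s(b,c))) with hΔ'
  have iE1 : (s(a,d)).inf = a := by simp [inf_eq_min]; omega
  have sE1 : (s(a,d)).sup = d := by simp [sup_eq_max]; omega
  have iE2 : (s(b,c)).inf = b := by simp [inf_eq_min]; omega
  have sE2 : (s(b,c)).sup = c := by simp [sup_eq_max]; omega
  have iN1 : (s(a,c)).inf = a := by simp [inf_eq_min]; omega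
  have sN1 : (s(a,c)).sup = c := by simp [sup_eq_max]; omega
  have iN2 : (s(b,d)).inf = b := by simp [inf_eq_min]; omega
  have sN2 : (s(b,d)).sup = d := by simp [sup_eq_max]; omega
  have hN1 : s(a,c) ∈ Δ' := Finset.mem_insert_self _ _
  have hN2 : s(b,d) ∈ Δ' := Finset.mem_insert_of_mem (Finset.mem_insert_self _ _)
  have hmemo : ∀ e ∈ Δ, e ≠ s(a,d) → e ≠ s(b,c) → e ∈ Δ' := fun e he h1 h2 =>
    Finset.mem_insert_of_mem (Finset.mem_insert_of_mem
      (Finset.mem_erase.mpr ⟨h2, Finset.mem_erase.mpr ⟨h1, he⟩⟩))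
  have hmemo' : ∀ e ∈ Δ', e = s(a,c) ∨ e = s(b,d) ∨ (e ∈ Δ ∧ e ≠ s(a,d) ∧ e ≠ s(b,c)) := by
    intro e he
    rcases Finset.mem_insert.mp he with rfl | he'
    · exact Or.inl rfl
    · rcases Finset.mem_insert.mp he' with rfl | he''
      · exact Or.inr (Or.inl rfl)
      · rw [Finset.mem_erase, Finset.mem_erase] at he''
        exact Or.inr (Or.inr ⟨he''.2.2, he''.2.1, he''.1⟩)
  have hda : ∀ e ∈ Δ, d ∈ e → e = s(a,d) := fun e he hv => edge_unique h he hE1 hv (by simp)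
  have hca : ∀ e ∈ Δ, c ∈ e → e = s(b,c) := fun e he hv => edge_unique h he hE2 hv (by simp)
  have hLeq : lefts Δ' = lefts Δ := by
    ext v
    rw [mem_lefts_iff, mem_lefts_iff]
    constructor
    · rintro ⟨e, he, rfl⟩
      rcases hmemo' e he with rfl | rfl | ⟨heΔ, _, _⟩
      · exact ⟨s(a,d), hE1, by rw [iN1, iE1]⟩
      · exact ⟨s(b,c), hE2, by rw [iN2, iE2]⟩
      · exact ⟨e, heΔ, rfl⟩
    · rintro ⟨e, he, rfl⟩
      by_cases h1 : e = s(a,d)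
      · subst h1
        exact ⟨s(a,c), hN1, by rw [iN1, iE1]⟩
      · by_cases h2 : e = s(b,c)
        · subst h2
          exact ⟨s(b,d), hN2, by rw [iN2, iE2]⟩
        · exact ⟨e, hmemo e he h1 h2, rfl⟩
  have hReq : rights Δ' = rights Δ := by
    ext v
    rw [mem_rights_iff, mem_rights_iff]
    constructor
    · rintro ⟨e, he, rfl⟩
      rcases hmemo' e he with rfl | rfl | ⟨heΔ, _, _⟩
      · exact ⟨s(b,c), hE2, by rw [sN1, sE2]⟩
      · exact ⟨s(a,d), hE1, by rw [sN2, sE1]⟩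
      · exact ⟨e, heΔ, rfl⟩
    · rintro ⟨e, he, rfl⟩
      by_cases h1 : e = s(a,d)
      · subst h1
        exact ⟨s(b,d), hN2, by rw [sN2, sE1]⟩
      · by_cases h2 : e = s(b,c)
        · subst h2
          exact ⟨s(a,c), hN1, by rw [sN1, sE2]⟩
        · exact ⟨e, hmemo e he h1 h2, rfl⟩
  have hk : Δ.card = Δ'.card := by
    rw [← card_rights h, ← card_rights h', hReq]
  have hLL : ∀ t : Fin Δ.card, Lemb h' (Fin.cast hk t) = Lemb h t := by
    have key : (fun t : Fin Δ'.card => Lemb h (Fin.cast hk.symm t))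
        = ⇑((lefts Δ').orderEmbOfFin (card_lefts h')) := by
      apply orderEmbOfFin_unique
      · intro t
        rw [hLeq]
        exact Lemb_mem h _
      · intro t t' htt
        exact (Lemb h).strictMono htt
    intro t
    exact (congrFun key (Fin.cast hk t)).symm
  have hRR : ∀ t : Fin Δ.card, Remb h' (Fin.cast hk t) = Remb h t := by
    have key : (fun t : Fin Δ'.card => Remb h (Fin.cast hk.symm t))
        = ⇑((rights Δ').orderEmbOfFin (card_rights h')) := by
      apply orderEmbOfFin_unique
      · intro t
        rw [hReq]
        exact Remb_mem h _
      · intro t t' htt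
        exact (Remb h).strictMono htt
    intro t
    exact (congrFun key (Fin.cast hk t)).symm
  have hpd : ptn Δ d = a := by
    have := ptn_eq h hE1; rwa [sE1, iE1] at this
  have hpc : ptn Δ c = b := by
    have := ptn_eq h hE2; rwa [sE2, iE2] at this
  have hpd' : ptn Δ' d = b := by
    have := ptn_eq h' hN2; rwa [sN2, iN2] at this
  have hpc' : ptn Δ' c = a := by
    have := ptn_eq h' hN1; rwa [sN1, iN1] at this
  have hpo : ∀ r ∈ rights Δ, r ≠ c → r ≠ d → ptn Δ' r = ptn Δ r := by
    intro r hr hrc hrd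
    obtain ⟨e, he, rfl⟩ := mem_rights_iff.mp hr
    have h1 : e ≠ s(a,d) := fun hc => hrd (by rw [hc, sE1])
    have h2 : e ≠ s(b,c) := fun hc => hrc (by rw [hc, sE2])
    rw [ptn_eq h he, ptn_eq h' (hmemo e he h1 h2)]
  have hdR : d ∈ rights Δ := mem_rights_iff.mpr ⟨s(a,d), hE1, sE1⟩
  have hcR : c ∈ rights Δ := mem_rights_iff.mpr ⟨s(b,c), hE2, sE2⟩
  obtain ⟨jd, hjd⟩ := Remb_surj h hdR
  obtain ⟨jc, hjc⟩ := Remb_surj h hcR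
  have hjcd : jc < jd := by
    rw [← (Remb h).lt_iff_lt, hjd, hjc]
    exact hcd
  set p : Fin Δ.card := jd.rev with hp
  set q : Fin Δ.card := jc.rev with hq
  have hpq : p < q := by
    rw [hp, hq, Fin.rev_lt_rev]
    exact hjcd
  have hprev : p.rev = jd := by rw [hp, Fin.rev_rev]
  have hqrev : q.rev = jc := by rw [hq, Fin.rev_rev]
  have hsp : Lemb h (phi h p) = a := by
    rw [Lemb_phi, hprev, hjd, hpd]
  have hsq : Lemb h (phi h q) = b := by
    rw [Lemb_phi, hqrev, hjc, hpc]
  have hσpq : phi h p < phi h q := by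
    rw [← (Lemb h).lt_iff_lt, hsp, hsq]
    exact hab
  have hbetween : ∀ v, phi h p < v → v < phi h q → (phi h).symm v < q := by
    intro v hv1 hv2
    have hu1 : a < Lemb h v := by rw [← hsp]; exact (Lemb h).strictMono hv1
    have hu2 : Lemb h v < b := by rw [← hsq]; exact (Lemb h).strictMono hv2
    obtain ⟨e, he, hei⟩ := mem_lefts_iff.mp (Lemb_mem h v)
    have heuv : s(Lemb h v, e.sup) = e := by rw [← hei, sym2_eq]
    have hw : c < e.sup := hcond (Lemb h v) e.sup hu1 hu2 (by rw [heuv]; exact he)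
    have hwR : e.sup ∈ rights Δ := mem_rights_iff.mpr ⟨e, he, rfl⟩
    obtain ⟨jw, hjw⟩ := Remb_surj h hwR
    have hphit : phi h jw.rev = v := by
      apply phi_eq_of_edge h (by rw [heuv]; exact he) (by omega) rfl
      rw [Fin.rev_rev, hjw]
    have hsymm : (phi h).symm v = jw.rev := by
      rw [← hphit, Equiv.symm_apply_apply]
    rw [hsymm, hq, Fin.rev_lt_rev]
    rw [← (Remb h).lt_iff_lt, hjc, hjw]
    exact hw
  have hτ : (⟨Δ'.card, phi h'⟩ : Σ n, Equiv.Perm (Fin n))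
      = ⟨Δ.card, phi h * Equiv.swap p q⟩ := by
    apply sigma_perm_ext _ _ hk.symm
    intro t
    set t0 : Fin Δ.card := Fin.cast hk.symm t with ht0
    have htt : t = Fin.cast hk t0 := rfl
    have hLv : Lemb h' (phi h' t) = Lemb h ((phi h * Equiv.swap p q) t0) := by
      rw [Lemb_phi]
      have hrev : t.rev = Fin.cast hk t0.rev := by
        rw [htt, rev_cast]
      rw [hrev, hRR]
      show ptn Δ' (Remb h t0.rev) = Lemb h (phi h (Equiv.swap p q t0))
      by_cases ht0p : t0 = p
      · rw [ht0p, hprev, hjd, hpd', Equiv.swap_apply_left, Lemb_phi, hqrev, hjc, hpc]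
      · by_cases ht0q : t0 = q
        · rw [ht0q, hqrev, hjc, hpc', Equiv.swap_apply_right, Lemb_phi, hprev, hjd, hpd]
        · rw [Equiv.swap_apply_of_ne_of_ne ht0p ht0q, Lemb_phi]
          apply hpo
          · exact Remb_mem h _
          · rw [← hjc]
            intro hc
            exact ht0q (by rw [hq, ← (Remb h).injective hc, Fin.rev_rev])
          · rw [← hjd]
            intro hc
            exact ht0p (by rw [hp, ← (Remb h).injective hc, Fin.rev_rev])
    have := hLL ((phi h * Equiv.swap p q) t0)
    rw [← this] at hLv
    have := (Lemb h').injective hLv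
    rw [this]
    rfl
  exact permStep_of_typeII_sigma (phi h) (phi h') p q hτ hpq hσpq hbetween

lemma phi_IIb {Δ Δ' : Finset (Sym2 ℕ)} (h : IsMatching Δ) (h' : IsMatching Δ')
    (hnd : ¬ HasDisj Δ') (hm : TypeIIb Δ Δ') : phiS Δ h = phiS Δ' h' := by
  obtain ⟨a, b, c, d, hab, hbc, hcd, hE1, hE2, hcond, rfl⟩ := hm
  set Δ' := insert s(a,b) (insert s(c,d) ((Δ.erase s(a,c)).erase s(b,d))) with hΔ'
  have iE1 : (s(a,c)).inf = a := by simp [inf_eq_min]; omega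
  have sE1 : (s(a,c)).sup = c := by simp [sup_eq_max]; omega
  have iE2 : (s(b,d)).inf = b := by simp [inf_eq_min]; omega
  have sE2 : (s(b,d)).sup = d := by simp [sup_eq_max]; omega
  have iN1 : (s(a,b)).inf = a := by simp [inf_eq_min]; omega
  have sN1 : (s(a,b)).sup = b := by simp [sup_eq_max]; omega
  have iN2 : (s(c,d)).inf = c := by simp [inf_eq_min]; omega
  have sN2 : (s(c,d)).sup = d := by simp [sup_eq_max]; omega
  have hN1 : s(a,b) ∈ Δ' := Finset.mem_insert_self _ _
  have hN2 : s(c,d) ∈ Δ' := Finset.mem_insert_of_mem (Finset.mem_insert_self _ _)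
  have hmemo : ∀ e ∈ Δ, e ≠ s(a,c) → e ≠ s(b,d) → e ∈ Δ' := fun e he h1 h2 =>
    Finset.mem_insert_of_mem (Finset.mem_insert_of_mem
      (Finset.mem_erase.mpr ⟨h2, Finset.mem_erase.mpr ⟨h1, he⟩⟩))
  have hmemo' : ∀ e ∈ Δ', e = s(a,b) ∨ e = s(c,d) ∨ (e ∈ Δ ∧ e ≠ s(a,c) ∧ e ≠ s(b,d)) := by
    intro e he
    rcases Finset.mem_insert.mp he with rfl | he'
    · exact Or.inl rfl
    · rcases Finset.mem_insert.mp he' with rfl | he''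
      · exact Or.inr (Or.inl rfl)
      · rw [Finset.mem_erase, Finset.mem_erase] at he''
        exact Or.inr (Or.inr ⟨he''.2.2, he''.2.1, he''.1⟩)
  have hbu : ∀ e ∈ Δ, b ∈ e → e = s(b,d) := fun e he hv => edge_unique h he hE2 hv (by simp)
  have hcu : ∀ e ∈ Δ, c ∈ e → e = s(a,c) := fun e he hv => edge_unique h he hE1 hv (by simp)
  have hgap : ∀ v, b < v → v < c → ¬ InMatch Δ v := by
    rintro v hv1 hv2 ⟨e, he, hve⟩
    rcases mem_iff'.mp hve with hvi | hvs
    · -- v = e.inf : partner e.sup > c, then e is disjoint from s(a,b) in Δ'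
      have hsupc : c < e.sup := by
        apply hcond v e.sup hv1 hv2
        rw [hvi, sym2_eq]
        exact he
      have hne1 : e ≠ s(a,c) := by
        intro hc
        rw [hc, iE1] at hvi
        omega
      have hne2 : e ≠ s(b,d) := by
        intro hc
        rw [hc, iE2] at hvi
        omega
      exact hnd ⟨s(a,b), hN1, e, hmemo e he hne1 hne2, by rw [sN1, ← hvi]; omega⟩
    · -- v = e.sup : partner e.inf, apply hcond with w = e.inf
      have : c < e.inf := by
        apply hcond v e.inf hv1 hv2
        rw [hvs, Sym2.eq_swap, sym2_eq]
        exact he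
      have := Sym2.inf_le_sup e
      omega
  have hbnR : b ∉ rights Δ := by
    intro hc
    obtain ⟨e, he, hse⟩ := mem_rights_iff.mp hc
    have := hbu e he (hse ▸ sup_mem e)
    rw [this, sE2] at hse
    omega
  have hcnL : c ∉ lefts Δ := by
    intro hc
    obtain ⟨e, he, hie⟩ := mem_lefts_iff.mp hc
    have := hcu e he (hie ▸ inf_mem e)
    rw [this, iE1] at hie
    omega
  have haL : a ∈ lefts Δ := mem_lefts_iff.mpr ⟨s(a,c), hE1, iE1⟩
  have hbL : b ∈ lefts Δ := mem_lefts_iff.mpr ⟨s(b,d), hE2, iE2⟩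
  have hcRR : c ∈ rights Δ := mem_rights_iff.mpr ⟨s(a,c), hE1, sE1⟩
  have hdR : d ∈ rights Δ := mem_rights_iff.mpr ⟨s(b,d), hE2, sE2⟩
  apply phiS_congr h h' (fun x => if x = b then c else x) (fun x => if x = c then b else x)
  · -- lefts
    ext v
    rw [mem_lefts_iff]
    simp only [Finset.mem_image]
    constructor
    · rintro ⟨e, he, rfl⟩
      rcases hmemo' e he with rfl | rfl | ⟨heΔ, hne1, hne2⟩
      · refine ⟨a, mem_lefts_iff.mpr ⟨s(a,c), hE1, iE1⟩, ?_⟩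
        rw [iN1]
        simp only [if_neg (by omega : a ≠ b)]
      · refine ⟨b, hbL, ?_⟩
        rw [iN2]
        simp
      · refine ⟨e.inf, mem_lefts_iff.mpr ⟨e, heΔ, rfl⟩, ?_⟩
        have : e.inf ≠ b := fun hc => hne2 (hbu e heΔ (hc ▸ inf_mem e))
        simp [this]
    · rintro ⟨x, hx, rfl⟩
      obtain ⟨e, he, rfl⟩ := mem_lefts_iff.mp hx
      by_cases h1 : e = s(a,c)
      · subst h1
        rw [iE1, if_neg (by omega : a ≠ b)]
        exact ⟨s(a,b), hN1, iN1⟩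
      · by_cases h2 : e = s(b,d)
        · subst h2
          rw [iE2, if_pos rfl]
          exact ⟨s(c,d), hN2, iN2⟩
        · have : e.inf ≠ b := fun hc => h2 (hbu e he (hc ▸ inf_mem e))
          rw [if_neg this]
          exact ⟨e, hmemo e he h1 h2, rfl⟩
  · -- rights
    ext v
    rw [mem_rights_iff]
    simp only [Finset.mem_image]
    constructor
    · rintro ⟨e, he, rfl⟩
      rcases hmemo' e he with rfl | rfl | ⟨heΔ, hne1, hne2⟩
      · refine ⟨c, hcRR, ?_⟩
        rw [sN1]
        simp
      · refine ⟨d, hdR, ?_⟩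
        rw [sN2]
        simp only [if_neg (by omega : d ≠ c)]
      · refine ⟨e.sup, mem_rights_iff.mpr ⟨e, heΔ, rfl⟩, ?_⟩
        have : e.sup ≠ c := fun hc => hne1 (hcu e heΔ (hc ▸ sup_mem e))
        simp [this]
    · rintro ⟨x, hx, rfl⟩
      obtain ⟨e, he, rfl⟩ := mem_rights_iff.mp hx
      by_cases h1 : e = s(a,c)
      · subst h1
        rw [sE1, if_pos rfl]
        exact ⟨s(a,b), hN1, sN1⟩
      · by_cases h2 : e = s(b,d)
        · subst h2
          rw [sE2, if_neg (by omega : d ≠ c)]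
          exact ⟨s(c,d), hN2, sN2⟩
        · have : e.sup ≠ c := fun hc => h1 (hcu e he (hc ▸ sup_mem e))
          rw [if_neg this]
          exact ⟨e, hmemo e he h1 h2, rfl⟩
  · -- lefts mono
    intro x hx y hy hxy
    by_cases hxb : x = b
    · have hyc : y ≠ c := fun hc => hcnL (hc ▸ hy)
      have hygap : ¬ (b < y ∧ y < c) := by
        intro ⟨hy1, hy2⟩
        obtain ⟨e, he, hie⟩ := mem_lefts_iff.mp hy
        exact hgap y hy1 hy2 ⟨e, he, hie ▸ inf_mem e⟩
      have hy4 : c < y := by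
        rcases Nat.lt_trichotomy y c with hlt | heq | hgt
        · exact absurd ⟨by omega, hlt⟩ hygap
        · exact absurd heq hyc
        · exact hgt
      rw [if_pos hxb, if_neg (by omega : y ≠ b)]
      omega
    · by_cases hyb : y = b
      · rw [if_neg hxb, if_pos hyb]
        omega
      · rw [if_neg hxb, if_neg hyb]
        exact hxy
  · -- rights mono
    intro x hx y hy hxy
    by_cases hxc : x = c
    · rw [if_pos hxc, if_neg (by omega : y ≠ c)]
      omega
    · by_cases hyc : y = c
      · have hxb : x ≠ b := fun hc => hbnR (hc ▸ hx)
        have hxgap : ¬ (b < x ∧ x < c) := by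
          intro ⟨hx1, hx2⟩
          obtain ⟨e, he, hse⟩ := mem_rights_iff.mp hx
          exact hgap x hx1 hx2 ⟨e, he, hse ▸ sup_mem e⟩
        have hx4 : x < b := by
          rcases Nat.lt_trichotomy x b with hlt | heq | hgt
          · exact hlt
          · exact absurd heq hxb
          · exact absurd ⟨hgt, by omega⟩ hxgap
        rw [if_neg hxc, if_pos hyc]
        omega
      · rw [if_neg hxc, if_neg hyc]
        exact hxy
  · -- hcomm
    intro r hr
    obtain ⟨e, he, rfl⟩ := mem_rights_iff.mp hr
    by_cases h1 : e = s(a,c)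
    · subst h1
      have hp1 : ptn Δ (s(a,c)).sup = a := by
        have := ptn_eq h hE1; rwa [iE1] at this
      have hp2 : ptn Δ' b = a := by
        have := ptn_eq h' hN1; rwa [sN1, iN1] at this
      rw [hp1, sE1, if_pos rfl, hp2, if_neg (by omega : a ≠ b)]
    · by_cases h2 : e = s(b,d)
      · subst h2
        have hp1 : ptn Δ (s(b,d)).sup = b := by
          have := ptn_eq h hE2; rwa [iE2] at this
        have hp2 : ptn Δ' d = c := by
          have := ptn_eq h' hN2; rwa [sN2, iN2] at this
        rw [hp1, sE2, if_neg (by omega : d ≠ c), hp2, if_pos rfl]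
      · have hsc : e.sup ≠ c := fun hc => h1 (hcu e he (hc ▸ sup_mem e))
        have hib : e.inf ≠ b := fun hc => h2 (hbu e he (hc ▸ inf_mem e))
        rw [if_neg hsc, ptn_eq h he, ptn_eq h' (hmemo e he h1 h2), if_neg hib]

lemma step_permLe {Δ Δ' : Finset (Sym2 ℕ)} (hs : MatchStep Δ Δ') (h : IsMatching Δ)
    (h' : IsMatching Δ') (hnd : ¬ HasDisj Δ') : PermLeI (phiS Δ h) (phiS Δ' h') := by
  rcases hs with hIa | hIb | hIIa | hIIb
  · exact Relation.ReflTransGen.single (Or.inl (phi_Ia h h' hIa))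
  · rw [phi_Ib h h' hIb]
    exact Relation.ReflTransGen.refl
  · exact Relation.ReflTransGen.single (phi_IIa h h' hIIa)
  · rw [phi_IIb h h' hnd hIIb]
    exact Relation.ReflTransGen.refl

lemma matchLe_permLe {Γ' : Finset (Sym2 ℕ)} (h' : IsMatching Γ') (hnd : ¬ HasDisj Γ') :
    ∀ {Δ : Finset (Sym2 ℕ)}, MatchLe Δ Γ' → ∀ (h : IsMatching Δ),
      PermLeI (phiS Δ h) (phiS Γ' h') ∧ ¬ HasDisj Δ := by
  intro Δ hml
  induction hml using Relation.ReflTransGen.head_induction_on with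
  | refl =>
    intro h
    exact ⟨Relation.ReflTransGen.refl, hnd⟩
  | head hstep hrest ih =>
    intro h
    have h2 := step_matching hstep h
    obtain ⟨hp, hnd2⟩ := ih h2
    refine ⟨Relation.ReflTransGen.trans (step_permLe hstep h h2 hnd2) hp, ?_⟩
    intro hd
    exact hnd2 (step_hasDisj hstep hd)

lemma intertwined_noDisj {k : ℕ} (σ : Equiv.Perm (Fin k)) : ¬ HasDisj (Mof k σ) := by
  rintro ⟨e, he, f, hf, hef⟩
  obtain ⟨j, rfl⟩ := mem_Mof.mp he
  obtain ⟨j', rfl⟩ := mem_Mof.mp hf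
  rw [Mof_sup, Mof_inf] at hef
  have h1 := Mof_lt σ j
  have h2 := Mof_lt σ j'
  omega

end MAux


/-- For intertwined perfect matchings `Γ` on `{1,…,2n}` and
`Γ'` on `{1,…,2m}`, one has `Γ ⊑ Γ'` if and only if `p_Γ ≤ᵢ p_{Γ'}`, where
`p_Γ` is the associated permutation of `{1,…,n}` given by `p_Γ(i) = e_{n+1−i}`
(here `π` and `π'` are the 0-based versions of `p_Γ` and `p_{Γ'}`). -/
theorem matching_le_iff_perm_le (n m : ℕ)
    (Γ Γ' : Finset (Sym2 ℕ)) (e e' : ℕ → ℕ)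
    (hΓ : IsIntertwined n Γ e) (hΓ' : IsIntertwined m Γ' e')
    (π : Equiv.Perm (Fin n)) (π' : Equiv.Perm (Fin m))
    (hπ : ∀ i : Fin n, (π i : ℕ) + 1 = e (n - (i : ℕ)))
    (hπ' : ∀ i : Fin m, (π' i : ℕ) + 1 = e' (m - (i : ℕ))) :
    MatchLe Γ Γ' ↔ PermLeI ⟨n, π⟩ ⟨m, π'⟩ := by
  have hEq : Γ = MAux.Mof n π := MAux.eq_Mof hΓ hπ
  have hEq' : Γ' = MAux.Mof m π' := MAux.eq_Mof hΓ' hπ'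
  constructor
  · intro hml
    have h1 : IsMatching Γ := hΓ.1
    have h2 : IsMatching Γ' := hΓ'.1
    have hnd : ¬ MAux.HasDisj Γ' := by
      rw [hEq']
      exact MAux.intertwined_noDisj π'
    have := (MAux.matchLe_permLe h2 hnd hml h1).1
    rwa [MAux.phiS_of_intertwined hΓ hπ h1, MAux.phiS_of_intertwined hΓ' hπ' h2] at this
  · intro hpl
    have := MAux.permLe_imp hpl
    rwa [← hEq, ← hEq'] at this
end

section
/- Koh–Ree characterization of permutation graphs: a simple graph G on vertex set {1,…,n} is equal to the permutation graph G_σ of some permutation σ of {1,…,n} if and only if its edge set, with each edge written as an ordered pair (i,j) with i < j, satisfies both: (P1) if (i,j) and (j,k) are edges then (i,k) is an edge; and (P2) if (i,k) is an edge and i < j < k, then (i,j) is an edge or (j,k) is an edge. -/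
lemma permGraph_adj_of_lt {n : ℕ} (σ : Equiv.Perm (Fin n)) {i j : Fin n} (hij : i < j) :
    (permGraph σ).Adj i j ↔ σ j < σ i := by
  simp only [permGraph, SimpleGraph.fromRel_adj]
  constructor
  · rintro ⟨-, ⟨-, h⟩ | ⟨h, -⟩⟩
    · exact h
    · exact absurd h (lt_asymm hij)
  · intro h
    exact ⟨hij.ne, Or.inl ⟨hij, h⟩⟩

/-- Rank function of a strict total order gives a permutation realizing it. -/
lemma exists_perm_of_strict_total {n : ℕ} (s : Fin n → Fin n → Prop)
    [DecidableRel s] (hirr : ∀ i, ¬ s i i)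
    (htrans : ∀ a b c, s a b → s b c → s a c)
    (htot : ∀ a b, a ≠ b → s a b ∨ s b a) :
    ∃ σ : Equiv.Perm (Fin n), ∀ i j, s i j ↔ σ i < σ j := by
  classical
  set f : Fin n → ℕ := fun i => (Finset.univ.filter (fun j => s j i)).card with hf
  have hmono : ∀ i j, s i j → f i < f j := by
    intro i j hij
    apply Finset.card_lt_card
    have hsub : Finset.univ.filter (fun k => s k i) ⊆ Finset.univ.filter (fun k => s k j) := by
      intro k hk
      simp only [Finset.mem_filter, Finset.mem_univ, true_and] at hk ⊢
      exact htrans k i j hk hij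
    rw [Finset.ssubset_iff_of_subset hsub]
    refine ⟨i, ?_, ?_⟩
    · simp [hij]
    · simp [hirr i]
  have hbound : ∀ i, f i < n := by
    intro i
    have : Finset.univ.filter (fun k => s k i) ⊂ Finset.univ := by
      rw [Finset.ssubset_univ_iff]
      intro h
      have : i ∈ Finset.univ.filter (fun k => s k i) := by
        rw [h]; exact Finset.mem_univ i
      simp only [Finset.mem_filter] at this
      exact hirr i this.2
    have := Finset.card_lt_card this
    simpa using this
  set g : Fin n → Fin n := fun i => ⟨f i, hbound i⟩ with hg
  have hginj : Function.Injective g := by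
    intro i j hij
    by_contra hne
    rcases htot i j hne with h | h
    · exact absurd (congrArg Fin.val hij) (hmono i j h).ne
    · exact absurd (congrArg Fin.val hij).symm (hmono j i h).ne
  have hgbij : Function.Bijective g := (Finite.injective_iff_bijective).mp hginj
  refine ⟨Equiv.ofBijective g hgbij, ?_⟩
  intro i j
  constructor
  · intro h
    exact (hmono i j h : f i < f j)
  · intro h
    have hne : i ≠ j := by
      rintro rfl; exact lt_irrefl _ h
    rcases htot i j hne with h' | h'
    · exact h'
    · exact absurd (hmono j i h') (by exact not_lt_of_gt h)

/-- Koh–Ree. A simple graph `G` on `{1,…,n}` is the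
permutation graph of some permutation of `{1,…,n}` if and only if, writing each
edge as an ordered pair `(i,j)` with `i < j`, it satisfies:
(P1) if `(i,j)` and `(j,k)` are edges then `(i,k)` is an edge; and
(P2) if `(i,k)` is an edge and `i < j < k`, then `(i,j)` or `(j,k)` is an edge. -/
theorem kohRee_characterization {n : ℕ} (G : SimpleGraph (Fin n)) :
    (∃ σ : Equiv.Perm (Fin n), G = permGraph σ) ↔
      ((∀ i j k : Fin n, i < j → j < k → G.Adj i j → G.Adj j k → G.Adj i k) ∧
       (∀ i j k : Fin n, i < j → j < k → G.Adj i k → (G.Adj i j ∨ G.Adj j k))) := by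
  classical
  constructor
  · rintro ⟨σ, rfl⟩
    constructor
    · intro i j k hij hjk hadj1 hadj2
      rw [permGraph_adj_of_lt σ hij] at hadj1
      rw [permGraph_adj_of_lt σ hjk] at hadj2
      rw [permGraph_adj_of_lt σ (hij.trans hjk)]
      exact hadj2.trans hadj1
    · intro i j k hij hjk hadj
      rw [permGraph_adj_of_lt σ (hij.trans hjk)] at hadj
      rw [permGraph_adj_of_lt σ hij, permGraph_adj_of_lt σ hjk]
      rcases lt_or_ge (σ i) (σ j) with h | h
      · exact Or.inr (hadj.trans_le h.le)
      · rcases eq_or_lt_of_le h with h' | h'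
        · exact Or.inr (h' ▸ hadj)
        · exact Or.inl h'
  · rintro ⟨h1, h2⟩
    set s : Fin n → Fin n → Prop :=
      fun a b => (a < b ∧ ¬ G.Adj a b) ∨ (b < a ∧ G.Adj b a) with hs
    haveI : DecidableRel s := fun a b => Classical.dec _
    have hirr : ∀ i, ¬ s i i := by
      rintro i (⟨h, -⟩ | ⟨h, -⟩) <;> exact lt_irrefl _ h
    have htrans : ∀ a b c, s a b → s b c → s a c := by
      rintro a b c (⟨hab, hN⟩ | ⟨hba, hA⟩) (⟨hbc, hN'⟩ | ⟨hcb, hA'⟩)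
      · exact Or.inl ⟨hab.trans hbc, fun h => (h2 a b c hab hbc h).elim hN hN'⟩
      · rcases lt_trichotomy a c with hac | rfl | hca
        · exact Or.inl ⟨hac, fun h => hN (h1 a c b hac hcb h hA')⟩
        · exact absurd hA' hN
        · exact Or.inr ⟨hca, (h2 c a b hca hab hA').resolve_right hN⟩
      · rcases lt_trichotomy a c with hac | rfl | hca
        · exact Or.inl ⟨hac, fun h => hN' (h1 b a c hba hac hA h)⟩
        · exact absurd hA hN'
        · exact Or.inr ⟨hca, (h2 b c a hbc hca hA).resolve_left hN'⟩
      · exact Or.inr ⟨hcb.trans hba, h1 c b a hcb hba hA' hA⟩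
    have htot : ∀ a b, a ≠ b → s a b ∨ s b a := by
      intro a b hne
      rcases lt_or_gt_of_ne hne with h | h
      · by_cases hadj : G.Adj a b
        · exact Or.inr (Or.inr ⟨h, hadj⟩)
        · exact Or.inl (Or.inl ⟨h, hadj⟩)
      · by_cases hadj : G.Adj b a
        · exact Or.inl (Or.inr ⟨h, hadj⟩)
        · exact Or.inr (Or.inl ⟨h, hadj⟩)
    obtain ⟨σ, hσ⟩ := exists_perm_of_strict_total s hirr htrans htot
    refine ⟨σ, ?_⟩
    have key : ∀ i j : Fin n, i < j → (G.Adj i j ↔ σ j < σ i) := by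
      intro i j hij
      rw [← hσ j i]
      constructor
      · intro h
        exact Or.inr ⟨hij, h⟩
      · rintro (⟨h, -⟩ | ⟨-, h⟩)
        · exact absurd h (lt_asymm hij)
        · exact h
    ext i j
    rcases lt_trichotomy i j with hij | rfl | hji
    · rw [key i j hij, permGraph_adj_of_lt σ hij]
    · simp
    · rw [G.adj_comm, (permGraph σ).adj_comm, key j i hji, permGraph_adj_of_lt σ hji]
end

section
/- Let σ be a permutation of {1,…,n} with n ≥ 2 whose permutation graph G_σ is connected, and let τ be a permutation of {1,…,n+1} obtained from σ by inserting a single new letter of value v at position p. If the vertex p is isolated (has degree 0) in the permutation graph G_τ, then either p = 1 and v = 1, or p = n+1 and v = n+1. That is, the only single-letter Type I extensions of such a σ that do not add an edge to the permutation graph are prepending the smallest value or appending the largest value. -/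
/-- Let `σ` be a permutation of `{1,…,n}` (`n ≥ 2`) whose
permutation graph is connected, and let `τ` be a permutation of `{1,…,n+1}`
obtained from `σ` by inserting a single new letter of value `v` at position `p`
(the hypothesis `hins` encodes, in 0-based form, that `τ p = v` and for `k ≠ p`,
`τ k = σ k'` if `σ k' < v` and `τ k = σ k' + 1` otherwise, where `k' = k` for
`k < p` and `k' = k − 1` for `k > p`). If the vertex `p` is isolated in `G_τ`,
then either `p` and `v` are both first (0 in 0-based form) or both last
(`n` in 0-based form): the only edge-free single-letter Type I extensions are
prepending the smallest value or appending the largest value. -/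
theorem isolated_insertion_is_extreme {n : ℕ} (hn : 2 ≤ n)
    (σ : Equiv.Perm (Fin n)) (hconn : (permGraph σ).Connected)
    (τ : Equiv.Perm (Fin (n + 1))) (p v : Fin (n + 1))
    (hpv : τ p = v)
    (hins : ∀ k : Fin (n + 1), k ≠ p → ∃ k' : Fin n,
      (k' : ℕ) = (if (k : ℕ) < (p : ℕ) then (k : ℕ) else (k : ℕ) - 1) ∧
      (τ k : ℕ) = (if (σ k' : ℕ) < (v : ℕ) then (σ k' : ℕ) else (σ k' : ℕ) + 1))
    (hiso : ∀ u : Fin (n + 1), ¬ (permGraph τ).Adj p u) :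
    ((p : ℕ) = 0 ∧ (v : ℕ) = 0) ∨ ((p : ℕ) = n ∧ (v : ℕ) = n) := by
  -- From isolation: k < p → τ k < v, and p < k → v < τ k.
  have hlt : ∀ k : Fin (n+1), k < p → τ k < v := by
    intro k hk
    by_contra h'
    have hne2 : τ k ≠ v := fun h => (ne_of_gt hk).symm (τ.injective (h.trans hpv.symm))
    have hv : v < τ k := lt_of_le_of_ne (not_lt.mp h') (Ne.symm hne2)
    apply hiso k
    rw [permGraph, SimpleGraph.fromRel_adj]
    exact ⟨ne_of_gt hk, Or.inr ⟨hk, by rw [hpv]; exact hv⟩⟩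
  have hgt : ∀ k : Fin (n+1), p < k → v < τ k := by
    intro k hk
    by_contra h'
    have hne2 : τ k ≠ v := fun h => (ne_of_lt hk) (τ.injective (hpv.trans h.symm))
    have hv : τ k < v := lt_of_le_of_ne (not_lt.mp h') hne2
    apply hiso k
    rw [permGraph, SimpleGraph.fromRel_adj]
    exact ⟨ne_of_lt hk, Or.inl ⟨hk, by rw [hpv]; exact hv⟩⟩
  -- Counting: p = v.
  have hfilter : Finset.univ.filter (fun k => τ k < v) = Finset.Iio p := by
    ext k
    simp only [Finset.mem_filter, Finset.mem_univ, true_and, Finset.mem_Iio]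
    constructor
    · intro h
      rcases lt_trichotomy k p with h' | h' | h'
      · exact h'
      · subst h'; rw [hpv] at h; exact absurd h (lt_irrefl _)
      · exact absurd h (not_lt.mpr (le_of_lt (hgt k h')))
    · exact hlt k
  have hpev : (p : ℕ) = (v : ℕ) := by
    have h1 : (Finset.univ.filter (fun k => τ k < v)).card = (p : ℕ) := by
      rw [hfilter, Fin.card_Iio]
    have h2 : Finset.univ.filter (fun k => τ k < v) =
        Finset.image τ.symm (Finset.Iio v) := by
      ext k
      simp only [Finset.mem_filter, Finset.mem_univ, true_and, Finset.mem_image,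
        Finset.mem_Iio]
      constructor
      · intro h; exact ⟨τ k, h, τ.symm_apply_apply k⟩
      · rintro ⟨w, hw, rfl⟩; rwa [τ.apply_symm_apply]
    have h3 : (Finset.univ.filter (fun k => τ k < v)).card = (v : ℕ) := by
      rw [h2, Finset.card_image_of_injective _ τ.symm.injective, Fin.card_Iio]
    omega
  -- σ preserves the split at p.
  have hsplit : ∀ k' : Fin n, ((k' : ℕ) < (p : ℕ) ↔ (σ k' : ℕ) < (p : ℕ)) := by
    intro k'
    constructor
    · intro hk'
      set k : Fin (n+1) := ⟨(k' : ℕ), Nat.lt_succ_of_lt k'.isLt⟩ with hkdef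
      have hkp : k < p := hk'
      obtain ⟨k'', h1, h2⟩ := hins k (ne_of_lt hkp)
      rw [if_pos hk'] at h1
      have hk'' : k'' = k' := Fin.ext h1
      subst hk''
      have hτ : (τ k : ℕ) < (v : ℕ) := hlt k hkp
      split_ifs at h2 <;> omega
    · intro hσ
      by_contra hk'
      push_neg at hk'
      set k : Fin (n+1) := ⟨(k' : ℕ) + 1, Nat.succ_lt_succ k'.isLt⟩ with hkdef
      have hkp : p < k := by
        show (p : ℕ) < (k' : ℕ) + 1
        omega
      obtain ⟨k'', h1, h2⟩ := hins k (ne_of_gt hkp)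
      rw [if_neg (by show ¬ ((k' : ℕ) + 1 < (p : ℕ)); omega)] at h1
      have hk'' : k'' = k' := Fin.ext (by simpa [hkdef] using h1)
      subst hk''
      have hτ : (v : ℕ) < (τ k : ℕ) := hgt k hkp
      split_ifs at h2 <;> omega
  -- Edges of permGraph σ don't cross the split.
  have hedge : ∀ a b : Fin n, (permGraph σ).Adj a b →
      ((a : ℕ) < (p : ℕ) ↔ (b : ℕ) < (p : ℕ)) := by
    intro a b hab
    rw [permGraph, SimpleGraph.fromRel_adj] at hab
    have ha := hsplit a
    have hb := hsplit b
    obtain ⟨-, ⟨h1, h2⟩ | ⟨h1, h2⟩⟩ := hab <;>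
    · have h1' : (_ : ℕ) < (_ : ℕ) := h1
      have h2' : (_ : ℕ) < (_ : ℕ) := h2
      omega
  -- Reachability preserves the split.
  have hreach : ∀ a b : Fin n, (permGraph σ).Reachable a b →
      ((a : ℕ) < (p : ℕ) ↔ (b : ℕ) < (p : ℕ)) := by
    intro a b ⟨w⟩
    induction w with
    | nil => exact Iff.rfl
    | cons h _ ih => exact (hedge _ _ h).trans ih
  -- Conclude p = 0 or p = n.
  rcases Nat.eq_zero_or_pos (p : ℕ) with hp0 | hp0
  · left; omega
  · rcases eq_or_lt_of_le (Nat.lt_succ_iff.mp p.isLt) with hpn | hpn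
    · right; omega
    · exfalso
      have h0n : 0 < n := by omega
      have := hreach ⟨0, h0n⟩ ⟨(p : ℕ), hpn⟩
        (hconn.preconnected ⟨0, h0n⟩ ⟨(p : ℕ), hpn⟩)
      simp only at this
      omega
end

section
/- For every perfect matching Γ of the vertex set {1,…,2m}, there is a finite sequence of Type II moves transforming Γ into the matching {{1,2}, {3,4}, …, {2m−1,2m}} consisting of the m consecutive edges. -/
/-- `Γ` is a perfect matching of `{1,…,2m}`. -/
def IsPerfectOn (m : ℕ) (Γ : Finset (Sym2 ℕ)) : Prop :=
  IsMatching Γ ∧ ∀ v : ℕ, InMatch Γ v ↔ 1 ≤ v ∧ v ≤ 2 * m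

/-- A single Type II move. -/
def TypeIIStep (Γ Γ' : Finset (Sym2 ℕ)) : Prop := TypeIIa Γ Γ' ∨ TypeIIb Γ Γ'

namespace PMaux
set_option maxHeartbeats 1000000

/-- length of an edge -/
def elen : Sym2 ℕ → ℕ := Sym2.lift ⟨fun x y => max x y - min x y, fun x y => by simp [max_comm, min_comm]⟩

@[simp] lemma elen_mk (x y : ℕ) : elen s(x,y) = max x y - min x y := rfl

/-- measure: sum of squared lengths -/
def meas (Γ : Finset (Sym2 ℕ)) : ℕ := Γ.sum fun e => (elen e)^2

lemma unique_partner {Γ : Finset (Sym2 ℕ)} (h : IsMatching Γ) {u v v' : ℕ}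
    (h1 : s(u,v) ∈ Γ) (h2 : s(u,v') ∈ Γ) : v = v' := by
  by_cases he : s(u,v) = s(u,v')
  · rcases Sym2.eq_iff.mp he with ⟨_, h⟩ | ⟨h1, h2⟩
    · exact h
    · omega
  · exact absurd (Sym2.mem_iff.mpr (Or.inl rfl)) (h.2 _ h1 _ h2 he u (Sym2.mem_iff.mpr (Or.inl rfl)))

lemma exists_partner {Γ : Finset (Sym2 ℕ)} {v : ℕ} (h : InMatch Γ v) : ∃ w, s(v,w) ∈ Γ := by
  obtain ⟨e, he, hv⟩ := h
  obtain ⟨w, rfl⟩ := Sym2.mem_iff_exists.mp hv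
  exact ⟨w, he⟩

lemma partner_ne {Γ : Finset (Sym2 ℕ)} (h : IsMatching Γ) {v w : ℕ} (hw : s(v,w) ∈ Γ) : v ≠ w := by
  intro he; exact h.1 _ hw (by simp [← he])

lemma vert_mem {m : ℕ} {Γ : Finset (Sym2 ℕ)} (h : IsPerfectOn m Γ) {v w : ℕ}
    (hw : s(v,w) ∈ Γ) : 1 ≤ v ∧ v ≤ 2*m :=
  (h.2 v).mp ⟨_, hw, Sym2.mem_iff.mpr (Or.inl rfl)⟩


lemma swap_meas (Γ : Finset (Sym2 ℕ)) (e1 e2 f1 f2 : Sym2 ℕ)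
    (h1 : e1 ∈ Γ) (h2 : e2 ∈ Γ) (h12 : e1 ≠ e2)
    (hf1 : f1 ∉ Γ) (hf2 : f2 ∉ Γ) (hff : f1 ≠ f2) :
    meas (insert f1 (insert f2 ((Γ.erase e1).erase e2))) + ((elen e1)^2 + (elen e2)^2)
      = meas Γ + ((elen f1)^2 + (elen f2)^2) := by
  have hΔ2 : f2 ∉ (Γ.erase e1).erase e2 := fun hm => hf2 (Finset.mem_of_mem_erase (Finset.mem_of_mem_erase hm))
  have hΔ1 : f1 ∉ insert f2 ((Γ.erase e1).erase e2) := by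
    simp only [Finset.mem_insert]
    rintro (rfl | hm)
    · exact hff rfl
    · exact hf1 (Finset.mem_of_mem_erase (Finset.mem_of_mem_erase hm))
  have he2 : e2 ∈ Γ.erase e1 := Finset.mem_erase.mpr ⟨fun h => h12 h.symm, h2⟩
  unfold meas
  rw [Finset.sum_insert hΔ1, Finset.sum_insert hΔ2,
    ← Finset.add_sum_erase _ _ h1, ← Finset.add_sum_erase _ _ he2]
  ring

lemma swap_perfect {m : ℕ} {Γ : Finset (Sym2 ℕ)} (h : IsPerfectOn m Γ)
    {w x y z p q r s : ℕ}
    (hd : w≠x ∧ w≠y ∧ w≠z ∧ x≠y ∧ x≠z ∧ y≠z)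
    (hd2 : p≠q ∧ r≠s ∧ p≠r ∧ p≠s ∧ q≠r ∧ q≠s)
    (hO : (p=w∨p=x∨p=y∨p=z) ∧ (q=w∨q=x∨q=y∨q=z) ∧ (r=w∨r=x∨r=y∨r=z) ∧ (s=w∨s=x∨s=y∨s=z))
    (hN : (w=p∨w=q∨w=r∨w=s) ∧ (x=p∨x=q∨x=r∨x=s) ∧ (y=p∨y=q∨y=r∨y=s) ∧ (z=p∨z=q∨z=r∨z=s))
    (h1 : s(w,x) ∈ Γ) (h2 : s(y,z) ∈ Γ) :
    IsPerfectOn m (insert s(p,q) (insert s(r,s) ((Γ.erase s(w,x)).erase s(y,z)))) := by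
  obtain ⟨⟨hdiag, hdisj⟩, hcov⟩ := h
  have hmem : ∀ e, e ∈ insert s(p,q) (insert s(r,s) ((Γ.erase s(w,x)).erase s(y,z))) ↔ e = s(p,q) ∨ e = s(r,s) ∨ (e ∈ Γ ∧ e ≠ s(w,x) ∧ e ≠ s(y,z)) := by
    intro e
    simp only [Finset.mem_insert, Finset.mem_erase]
    constructor
    · rintro (h|h|⟨h2,h1,h⟩)
      exacts [Or.inl h, Or.inr (Or.inl h), Or.inr (Or.inr ⟨h,h1,h2⟩)]
    · rintro (h|h|⟨h,h1,h2⟩)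
      exacts [Or.inl h, Or.inr (Or.inl h), Or.inr (Or.inr ⟨h2,h1,h⟩)]
  -- old edges distinct
  have h12 : s(w,x) ≠ s(y,z) := by
    intro hc
    clear hmem hO hN
    rcases Sym2.eq_iff.mp hc with ⟨h1',h2'⟩|⟨h1',h2'⟩ <;> omega
  -- any other old edge avoids the four vertices
  have havoid : ∀ e ∈ Γ, e ≠ s(w,x) → e ≠ s(y,z) → ∀ v ∈ e, v≠w ∧ v≠x ∧ v≠y ∧ v≠z := by
    intro e he hne1 hne2 v hv
    refine ⟨?_, ?_, ?_, ?_⟩ <;> rintro rfl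
    · exact hdisj _ he _ h1 hne1 v hv (Sym2.mem_iff.mpr (Or.inl rfl))
    · exact hdisj _ he _ h1 hne1 v hv (Sym2.mem_iff.mpr (Or.inr rfl))
    · exact hdisj _ he _ h2 hne2 v hv (Sym2.mem_iff.mpr (Or.inl rfl))
    · exact hdisj _ he _ h2 hne2 v hv (Sym2.mem_iff.mpr (Or.inr rfl))
  constructor
  · constructor
    · intro e he
      rcases (hmem e).mp he with rfl | rfl | ⟨he, _, _⟩
      · simp [Sym2.mk_isDiag_iff]; exact hd2.1
      · simp [Sym2.mk_isDiag_iff]; exact hd2.2.1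
      · exact hdiag _ he
    · intro e he f hf hef v hv hvf
      rcases (hmem e).mp he with rfl | rfl | ⟨he, hne1, hne2⟩ <;>
        rcases (hmem f).mp hf with rfl | rfl | ⟨hf', hfe1, hfe2⟩
      · exact hef rfl
      · have hv1 := Sym2.mem_iff.mp hv
        have hv2 := Sym2.mem_iff.mp hvf
        clear hmem hO hN
        omega
      · have ha := havoid _ hf' hfe1 hfe2 v hvf
        have hv1 := Sym2.mem_iff.mp hv
        have hp := hO.1
        have hq := hO.2.1
        clear hmem hO hN
        omega
      · have hv1 := Sym2.mem_iff.mp hv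
        have hv2 := Sym2.mem_iff.mp hvf
        clear hmem hO hN
        omega
      · exact hef rfl
      · have ha := havoid _ hf' hfe1 hfe2 v hvf
        have hv1 := Sym2.mem_iff.mp hv
        have hr := hO.2.2.1
        have hs := hO.2.2.2
        clear hmem hO hN
        omega
      · have ha := havoid _ he hne1 hne2 v hv
        have hv1 := Sym2.mem_iff.mp hvf
        have hp := hO.1
        have hq := hO.2.1
        clear hmem hO hN
        omega
      · have ha := havoid _ he hne1 hne2 v hv
        have hv1 := Sym2.mem_iff.mp hvf
        have hr := hO.2.2.1
        have hs := hO.2.2.2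
        clear hmem hO hN
        omega
      · exact hdisj _ he _ hf' hef v hv hvf
  · intro v
    rw [← hcov v]
    constructor
    · rintro ⟨e, he, hv⟩
      rcases (hmem e).mp he with rfl | rfl | ⟨he, _, _⟩
      · rcases Sym2.mem_iff.mp hv with rfl | rfl
        · rcases hO.1 with rfl|rfl|rfl|rfl
          · exact ⟨_, h1, Sym2.mem_iff.mpr (Or.inl rfl)⟩
          · exact ⟨_, h1, Sym2.mem_iff.mpr (Or.inr rfl)⟩
          · exact ⟨_, h2, Sym2.mem_iff.mpr (Or.inl rfl)⟩
          · exact ⟨_, h2, Sym2.mem_iff.mpr (Or.inr rfl)⟩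
        · rcases hO.2.1 with rfl|rfl|rfl|rfl
          · exact ⟨_, h1, Sym2.mem_iff.mpr (Or.inl rfl)⟩
          · exact ⟨_, h1, Sym2.mem_iff.mpr (Or.inr rfl)⟩
          · exact ⟨_, h2, Sym2.mem_iff.mpr (Or.inl rfl)⟩
          · exact ⟨_, h2, Sym2.mem_iff.mpr (Or.inr rfl)⟩
      · rcases Sym2.mem_iff.mp hv with rfl | rfl
        · rcases hO.2.2.1 with rfl|rfl|rfl|rfl
          · exact ⟨_, h1, Sym2.mem_iff.mpr (Or.inl rfl)⟩
          · exact ⟨_, h1, Sym2.mem_iff.mpr (Or.inr rfl)⟩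
          · exact ⟨_, h2, Sym2.mem_iff.mpr (Or.inl rfl)⟩
          · exact ⟨_, h2, Sym2.mem_iff.mpr (Or.inr rfl)⟩
        · rcases hO.2.2.2 with rfl|rfl|rfl|rfl
          · exact ⟨_, h1, Sym2.mem_iff.mpr (Or.inl rfl)⟩
          · exact ⟨_, h1, Sym2.mem_iff.mpr (Or.inr rfl)⟩
          · exact ⟨_, h2, Sym2.mem_iff.mpr (Or.inl rfl)⟩
          · exact ⟨_, h2, Sym2.mem_iff.mpr (Or.inr rfl)⟩
      · exact ⟨e, he, hv⟩
    · rintro ⟨e, he, hv⟩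
      by_cases hne1 : e = s(w,x)
      · subst hne1
        rcases Sym2.mem_iff.mp hv with rfl | rfl
        · rcases hN.1 with rfl|rfl|rfl|rfl
          · exact ⟨_, (hmem _).mpr (Or.inl rfl), Sym2.mem_iff.mpr (Or.inl rfl)⟩
          · exact ⟨_, (hmem _).mpr (Or.inl rfl), Sym2.mem_iff.mpr (Or.inr rfl)⟩
          · exact ⟨_, (hmem _).mpr (Or.inr (Or.inl rfl)), Sym2.mem_iff.mpr (Or.inl rfl)⟩
          · exact ⟨_, (hmem _).mpr (Or.inr (Or.inl rfl)), Sym2.mem_iff.mpr (Or.inr rfl)⟩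
        · rcases hN.2.1 with rfl|rfl|rfl|rfl
          · exact ⟨_, (hmem _).mpr (Or.inl rfl), Sym2.mem_iff.mpr (Or.inl rfl)⟩
          · exact ⟨_, (hmem _).mpr (Or.inl rfl), Sym2.mem_iff.mpr (Or.inr rfl)⟩
          · exact ⟨_, (hmem _).mpr (Or.inr (Or.inl rfl)), Sym2.mem_iff.mpr (Or.inl rfl)⟩
          · exact ⟨_, (hmem _).mpr (Or.inr (Or.inl rfl)), Sym2.mem_iff.mpr (Or.inr rfl)⟩
      · by_cases hne2 : e = s(y,z)
        · subst hne2
          rcases Sym2.mem_iff.mp hv with rfl | rfl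
          · rcases hN.2.2.1 with rfl|rfl|rfl|rfl
            · exact ⟨_, (hmem _).mpr (Or.inl rfl), Sym2.mem_iff.mpr (Or.inl rfl)⟩
            · exact ⟨_, (hmem _).mpr (Or.inl rfl), Sym2.mem_iff.mpr (Or.inr rfl)⟩
            · exact ⟨_, (hmem _).mpr (Or.inr (Or.inl rfl)), Sym2.mem_iff.mpr (Or.inl rfl)⟩
            · exact ⟨_, (hmem _).mpr (Or.inr (Or.inl rfl)), Sym2.mem_iff.mpr (Or.inr rfl)⟩
          · rcases hN.2.2.2 with rfl|rfl|rfl|rfl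
            · exact ⟨_, (hmem _).mpr (Or.inl rfl), Sym2.mem_iff.mpr (Or.inl rfl)⟩
            · exact ⟨_, (hmem _).mpr (Or.inl rfl), Sym2.mem_iff.mpr (Or.inr rfl)⟩
            · exact ⟨_, (hmem _).mpr (Or.inr (Or.inl rfl)), Sym2.mem_iff.mpr (Or.inl rfl)⟩
            · exact ⟨_, (hmem _).mpr (Or.inr (Or.inl rfl)), Sym2.mem_iff.mpr (Or.inr rfl)⟩
        · exact ⟨e, (hmem e).mpr (Or.inr (Or.inr ⟨he, hne1, hne2⟩)), hv⟩


def tgt (m : ℕ) : Finset (Sym2 ℕ) := (Finset.range m).image fun i => s(2*i+1, 2*i+2)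

lemma swap_mem {Γ : Finset (Sym2 ℕ)} {x y : ℕ} (h : s(x,y) ∈ Γ) : s(y,x) ∈ Γ := by
  rw [Sym2.eq_swap]; exact h

lemma consec_mem {m : ℕ} {Γ : Finset (Sym2 ℕ)} (h : IsPerfectOn m Γ)
    (hs : ∀ e ∈ Γ, elen e ≤ 1) : ∀ i, i < m → s(2*i+1, 2*i+2) ∈ Γ := by
  intro i
  induction i using Nat.strong_induction_on with
  | _ i ih =>
    intro him
    obtain ⟨w, hw⟩ := exists_partner ((h.2 (2*i+1)).mpr ⟨by omega, by omega⟩)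
    have hlen : elen s(2*i+1, w) ≤ 1 := hs _ hw
    rw [elen_mk] at hlen
    have hne := partner_ne h.1 hw
    have hwr := vert_mem h (swap_mem hw)
    have : w = 2*i ∨ w = 2*i+2 := by omega
    rcases this with rfl | rfl
    · exfalso
      obtain ⟨j, rfl⟩ : ∃ j, i = j+1 := ⟨i-1, by omega⟩
      have h1 := ih j (by omega) (by omega)
      have := unique_partner h.1 (swap_mem hw) (swap_mem (by convert h1 using 2 <;> omega))
      omega
    · exact hw

lemma short_eq_tgt {m : ℕ} {Γ : Finset (Sym2 ℕ)} (h : IsPerfectOn m Γ)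
    (hs : ∀ e ∈ Γ, elen e ≤ 1) : Γ = tgt m := by
  have hsub := consec_mem h hs
  have key : ∀ x y : ℕ, x < y → s(x,y) ∈ Γ → s(x,y) ∈ tgt m := by
    intro x y hxy hw
    have hlen : elen s(x,y) ≤ 1 := hs _ hw
    rw [elen_mk] at hlen
    have hxr := vert_mem h hw
    have hyr := vert_mem h (swap_mem hw)
    have hy : y = x + 1 := by omega
    subst hy
    rcases Nat.even_or_odd x with hev | hodd
    · exfalso
      obtain ⟨j, rfl⟩ : ∃ j, x = 2*j+2 := by
        obtain ⟨k, hk⟩ := hev; exact ⟨k-1, by omega⟩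
      have h1 := hsub j (by omega)
      have := unique_partner h.1 hw (swap_mem h1)
      omega
    · obtain ⟨j, rfl⟩ : ∃ j, x = 2*j+1 := by
        obtain ⟨k, hk⟩ := hodd; exact ⟨k, by omega⟩
      refine Finset.mem_image.mpr ⟨j, Finset.mem_range.mpr (by omega), ?_⟩
      rw [show 2*j+1+1 = 2*j+2 from rfl]
  apply Finset.Subset.antisymm
  · intro e
    induction e using Sym2.ind with
    | _ x y =>
      intro he
      have hne := partner_ne h.1 he
      rcases Nat.lt_or_ge x y with hxy | hge
      · exact key x y hxy he
      · have hyx : y < x := by omega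
        rw [Sym2.eq_swap]
        exact key y x hyx (swap_mem he)
  · intro e he
    obtain ⟨i, hi, rfl⟩ := Finset.mem_image.mp he
    exact hsub i (Finset.mem_range.mp hi)


lemma step {m : ℕ} {Γ : Finset (Sym2 ℕ)} (h : IsPerfectOn m Γ) (hne : Γ ≠ tgt m) :
    ∃ Γ', TypeIIStep Γ Γ' ∧ IsPerfectOn m Γ' ∧ meas Γ' < meas Γ := by
  classical
  have hlong : ∃ c, ∃ a, a + 2 ≤ c ∧ s(a,c) ∈ Γ := by
    by_contra hno
    push_neg at hno
    refine hne (short_eq_tgt h ?_)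
    intro e
    induction e using Sym2.ind with
    | _ x y =>
      intro he
      by_contra hgt
      push_neg at hgt
      rw [elen_mk] at hgt
      rcases le_total x y with hxy | hyx
      · exact hno y x (by omega) he
      · exact hno x y (by omega) (swap_mem he)
  obtain ⟨a, hac, haΓ⟩ := Nat.find_spec hlong
  set C := Nat.find hlong with hC
  have hmin : ∀ c', c' < C → ∀ a', a' + 2 ≤ c' → s(a',c') ∉ Γ := by
    intro c' hc' a' h2 hmem
    exact Nat.find_min hlong hc' ⟨a', h2, hmem⟩
  have haR := vert_mem h haΓ
  have hCR := vert_mem h (swap_mem haΓ)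
  have hpartner : ∀ v w : ℕ, a < v → v < C → s(v,w) ∈ Γ →
      (a < w ∧ w < C ∧ w ≠ v) ∨ C < w := by
    intro v w hav hvC hvw
    have hwne := partner_ne h.1 hvw
    have hwa : w ≠ a := by
      rintro rfl
      have := unique_partner h.1 (swap_mem hvw) haΓ
      omega
    have hwC : w ≠ C := by
      rintro rfl
      have := unique_partner h.1 (swap_mem hvw) (swap_mem haΓ)
      omega
    rcases Nat.lt_trichotomy w C with hw | rfl | hw
    · left
      refine ⟨?_, hw, fun hh => hwne hh.symm⟩
      by_contra hwa'
      push_neg at hwa'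
      exact hmin v hvC w (by omega) (swap_mem hvw)
    · exact absurd rfl hwC
    · right; exact hw
  by_cases hQ : ∃ u, a < u ∧ u < C ∧ ∃ u', a < u' ∧ u' < C ∧ s(u,u') ∈ Γ
  · -- Type IIa case
    obtain ⟨hau, huC, u', hau', hu'C, huu'⟩ := Nat.find_spec hQ
    set u := Nat.find hQ with hu
    have humin := fun {v} (hv : v < u) => Nat.find_min hQ hv
    have hun : u ≠ u' := partner_ne h.1 huu'
    have huu : u < u' := by
      rcases Nat.lt_trichotomy u u' with hlt | heq | hgt
      · exact hlt
      · omega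
      · exact absurd ⟨hau', hu'C, u, hau, huC, swap_mem huu'⟩ (humin hgt)
    have hu1 : u' = u + 1 := by
      by_contra hne'
      exact hmin u' hu'C u (by omega) huu'
    subst hu1
    have cond : ∀ v w, a < v → v < u → s(v,w) ∈ Γ → u + 1 < w := by
      intro v w hav hvu hvw
      rcases hpartner v w hav (by omega) hvw with ⟨h1', h2', _⟩ | hCw
      · exact absurd ⟨hav, by omega, w, h1', h2', hvw⟩ (humin hvu)
      · omega
    refine ⟨insert s(a,u+1) (insert s(u,C) ((Γ.erase s(a,C)).erase s(u,u+1))),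
      Or.inl ⟨a, u, u+1, C, hau, by omega, by omega, haΓ, huu', cond, rfl⟩, ?_, ?_⟩
    · exact swap_perfect h
        ⟨by omega, by omega, by omega, by omega, by omega, by omega⟩
        ⟨by omega, by omega, by omega, by omega, by omega, by omega⟩
        ⟨Or.inl rfl, Or.inr (Or.inr (Or.inr rfl)), Or.inr (Or.inr (Or.inl rfl)),
          Or.inr (Or.inl rfl)⟩
        ⟨Or.inl rfl, Or.inr (Or.inr (Or.inr rfl)), Or.inr (Or.inr (Or.inl rfl)),
          Or.inr (Or.inl rfl)⟩
        haΓ huu'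
    · have hf1 : s(a,u+1) ∉ Γ := by
        intro hm
        have := unique_partner h.1 hm haΓ
        omega
      have hf2 : s(u,C) ∉ Γ := by
        intro hm
        have := unique_partner h.1 hm huu'
        omega
      have hff : s(a,u+1) ≠ s(u,C) := by
        intro hc
        rcases Sym2.eq_iff.mp hc with ⟨h1', h2'⟩ | ⟨h1', h2'⟩ <;> omega
      have h12 : s(a,C) ≠ s(u,u+1) := by
        intro hc
        rcases Sym2.eq_iff.mp hc with ⟨h1', h2'⟩ | ⟨h1', h2'⟩ <;> omega
      have hmeq := swap_meas Γ s(a,C) s(u,u+1) s(a,u+1) s(u,C) haΓ huu' h12 hf1 hf2 hff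
      have e1 : elen s(a,C) = C - a := by rw [elen_mk]; omega
      have e2 : elen s(u,u+1) = 1 := by rw [elen_mk]; omega
      have e3 : elen s(a,u+1) = u + 1 - a := by rw [elen_mk]; omega
      have e4 : elen s(u,C) = C - u := by rw [elen_mk]; omega
      rw [e1, e2, e3, e4] at hmeq
      obtain ⟨A, hA⟩ : ∃ A, u = a + A + 1 := ⟨u - a - 1, by omega⟩
      obtain ⟨B, hB⟩ : ∃ B, C = u + B + 2 := ⟨C - u - 2, by omega⟩
      have hlt : (u + 1 - a)^2 + (C - u)^2 < (C - a)^2 + 1^2 := by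
        rw [show u + 1 - a = A + 2 by omega, show C - u = B + 2 by omega,
          show C - a = A + B + 3 by omega]
        nlinarith [Nat.zero_le (A * B)]
      omega
  · -- Type IIb case
    obtain ⟨w1, hw1⟩ := exists_partner ((h.2 (a+1)).mpr ⟨by omega, by omega⟩)
    have hCw1 : C < w1 := by
      rcases hpartner (a+1) w1 (by omega) (by omega) hw1 with ⟨h1', h2', _⟩ | hCw
      · exact absurd ⟨a+1, by omega, by omega, w1, h1', h2', hw1⟩ hQ
      · exact hCw
    have cond : ∀ v w, a + 1 < v → v < C → s(v,w) ∈ Γ → C < w := by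
      intro v w hav hvC hvw
      rcases hpartner v w (by omega) hvC hvw with ⟨h1', h2', _⟩ | hCw
      · exact absurd ⟨v, by omega, hvC, w, h1', h2', hvw⟩ hQ
      · exact hCw
    refine ⟨insert s(a,a+1) (insert s(C,w1) ((Γ.erase s(a,C)).erase s(a+1,w1))),
      Or.inr ⟨a, a+1, C, w1, by omega, by omega, hCw1, haΓ, hw1, cond, rfl⟩, ?_, ?_⟩
    · exact swap_perfect h
        ⟨by omega, by omega, by omega, by omega, by omega, by omega⟩
        ⟨by omega, by omega, by omega, by omega, by omega, by omega⟩
        ⟨Or.inl rfl, Or.inr (Or.inr (Or.inl rfl)), Or.inr (Or.inl rfl),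
          Or.inr (Or.inr (Or.inr rfl))⟩
        ⟨Or.inl rfl, Or.inr (Or.inr (Or.inl rfl)), Or.inr (Or.inl rfl),
          Or.inr (Or.inr (Or.inr rfl))⟩
        haΓ hw1
    · have hf1 : s(a,a+1) ∉ Γ := by
        intro hm
        have := unique_partner h.1 hm haΓ
        omega
      have hf2 : s(C,w1) ∉ Γ := by
        intro hm
        have := unique_partner h.1 hm (swap_mem haΓ)
        omega
      have hff : s(a,a+1) ≠ s(C,w1) := by
        intro hc
        rcases Sym2.eq_iff.mp hc with ⟨h1', h2'⟩ | ⟨h1', h2'⟩ <;> omega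
      have h12 : s(a,C) ≠ s(a+1,w1) := by
        intro hc
        rcases Sym2.eq_iff.mp hc with ⟨h1', h2'⟩ | ⟨h1', h2'⟩ <;> omega
      have hmeq := swap_meas Γ s(a,C) s(a+1,w1) s(a,a+1) s(C,w1) haΓ hw1 h12 hf1 hf2 hff
      have e1 : elen s(a,C) = C - a := by rw [elen_mk]; omega
      have e2 : elen s(a+1,w1) = w1 - (a+1) := by rw [elen_mk]; omega
      have e3 : elen s(a,a+1) = 1 := by rw [elen_mk]; omega
      have e4 : elen s(C,w1) = w1 - C := by rw [elen_mk]; omega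
      rw [e1, e2, e3, e4] at hmeq
      obtain ⟨P, hP⟩ : ∃ P, C = a + P + 2 := ⟨C - a - 2, by omega⟩
      obtain ⟨Q, hQ'⟩ : ∃ Q, w1 = C + Q + 1 := ⟨w1 - C - 1, by omega⟩
      have hlt : 1^2 + (w1 - C)^2 < (C - a)^2 + (w1 - (a+1))^2 := by
        rw [show w1 - C = Q + 1 by omega, show C - a = P + 2 by omega,
          show w1 - (a+1) = P + Q + 2 by omega]
        nlinarith [Nat.zero_le (P * Q)]
      omega

end PMaux

/-- Every perfect matching of `{1,…,2m}` can be transformed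
by a finite sequence of Type II moves into the matching
`{{1,2}, {3,4}, …, {2m−1,2m}}` of `m` consecutive edges. -/
theorem perfect_matching_to_consecutive (m : ℕ) (Γ : Finset (Sym2 ℕ))
    (h : IsPerfectOn m Γ) :
    Relation.ReflTransGen TypeIIStep Γ
      ((Finset.range m).image fun i => s(2 * i + 1, 2 * i + 2)) := by
  classical
  have main : ∀ n (Δ : Finset (Sym2 ℕ)), PMaux.meas Δ = n → IsPerfectOn m Δ →
      Relation.ReflTransGen TypeIIStep Δ (PMaux.tgt m) := by
    intro n
    induction n using Nat.strong_induction_on with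
    | _ n ih =>
      intro Δ hn hperf
      by_cases heq : Δ = PMaux.tgt m
      · exact heq ▸ Relation.ReflTransGen.refl
      · obtain ⟨Δ', hstep, hperf', hlt⟩ := PMaux.step hperf heq
        exact Relation.ReflTransGen.head hstep (ih _ (hn ▸ hlt) Δ' rfl hperf')
  exact main _ Γ rfl h
end
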